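/- arXiv:2111.10038 — 11 statements merged into one kernel-verified Lean document; each statement's English description precedes it below -/
import Mathlib

section
/- If a graph G is k-word-representable (there is a word W representing G in which every letter occurs exactly k times), then G is (k+1)-word-representable. -/
/-- `W` is a word-representant for `G`: distinct letters `x`, `y` alternate in `W`
(the restriction of `W` to `{x, y}` has no two equal consecutive letters) iff `x` and `y`
are adjacent in `G`. -/
def WordRepresents {V : Type*} [DecidableEq V] (W : List V) (G : SimpleGraph V) : Prop :=
  ∀ x y : V, x ≠ y →
    ((W.filter (fun a => a = x ∨ a = y)).Chain' (· ≠ ·) ↔ G.Adj x y)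

private lemma filter_dedup_comm {α : Type*} [DecidableEq α] (p : α → Bool) (l : List α) :
    l.dedup.filter p = (l.filter p).dedup := by
  induction l with
  | nil => simp
  | cons a l ih =>
    by_cases hm : a ∈ l
    · rw [List.dedup_cons_of_mem hm]
      by_cases hp : p a
      · rw [List.filter_cons_of_pos hp,
          List.dedup_cons_of_mem (List.mem_filter.mpr ⟨hm, hp⟩), ih]
      · rw [List.filter_cons_of_neg hp, ih]
    · rw [List.dedup_cons_of_notMem hm]
      by_cases hp : p a
      · rw [List.filter_cons_of_pos hp, List.filter_cons_of_pos hp,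
          List.dedup_cons_of_notMem (fun hc => hm (List.mem_filter.mp hc).1), ih]
      · rw [List.filter_cons_of_neg hp, List.filter_cons_of_neg hp, ih]

private lemma nodup_two {α : Type*} {x y : α} (hxy : x ≠ y) :
    ∀ l : List α, l.Nodup → (∀ a ∈ l, a = x ∨ a = y) → x ∈ l → y ∈ l →
      l = [x, y] ∨ l = [y, x] := by
  rintro (_ | ⟨a, _ | ⟨b, t⟩⟩) hnd hall hx hy
  · simp at hx
  · simp at hx hy; exact absurd (hx.trans hy.symm) hxy
  · have hab : a ≠ b := by
      intro hc; subst hc; simp at hnd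
    have ht : t = [] := by
      cases t with
      | nil => rfl
      | cons c t' =>
        have hc := hall c (by simp)
        have ha := hall a (by simp)
        have hb := hall b (by simp)
        simp only [List.nodup_cons, List.mem_cons] at hnd
        rcases hc with rfl | rfl <;> rcases ha with rfl | rfl <;> rcases hb with rfl | rfl <;>
          simp at hnd hab ⊢
    subst ht
    have ha := hall a (by simp)
    have hb := hall b (by simp)
    rcases ha with rfl | rfl
    · rcases hb with rfl | rfl
      · exact absurd rfl hab
      · exact Or.inl rfl
    · rcases hb with rfl | rfl
      · exact Or.inr rfl
      · exact absurd rfl hab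

private lemma getLast?_dedup {α : Type*} [DecidableEq α] :
    ∀ l : List α, l.dedup.getLast? = l.getLast? := by
  intro l
  induction l with
  | nil => simp
  | cons a t ih =>
    cases t with
    | nil => simp
    | cons b t' =>
      by_cases hm : a ∈ b :: t'
      · rw [List.dedup_cons_of_mem hm, List.getLast?_cons_cons, ih]
      · rw [List.dedup_cons_of_notMem hm, List.getLast?_cons_cons, ← ih]
        rcases hd : (b :: t').dedup with _ | ⟨c, g⟩
        · exact absurd ((List.dedup_eq_nil _).mp hd) (by simp)
        · rw [List.getLast?_cons_cons]

/-- If a graph `G` is `k`-word-representable (some word representing `G` has every letter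
occurring exactly `k` times), then `G` is `(k+1)`-word-representable. -/
theorem kWordRepresentable_succ {V : Type*} [Fintype V] [DecidableEq V] (G : SimpleGraph V) (k : ℕ)
    (h : ∃ W : List V, WordRepresents W G ∧ ∀ v : V, W.count v = k) :
    ∃ W : List V, WordRepresents W G ∧ ∀ v : V, W.count v = k + 1 := by
  obtain ⟨W, hrep, hcount⟩ := h
  rcases Nat.eq_zero_or_pos k with rfl | hk
  · -- k = 0 : W is empty and G is complete
    have hW : W = [] := by
      cases W with
      | nil => rfl
      | cons a t => have := hcount a; simp at this
    subst hW
    refine ⟨Finset.univ.toList, fun x y hxy => ?_, fun v => ?_⟩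
    · have hadj : G.Adj x y := (hrep x y hxy).mp (by simp [List.Chain'])
      simp only [hadj, iff_true]
      set l := Finset.univ.toList.filter (fun a => decide (a = x ∨ a = y)) with hl
      have hnd : l.Nodup := (Finset.nodup_toList _).filter _
      have hx : x ∈ l := List.mem_filter.mpr ⟨Finset.mem_toList.mpr (Finset.mem_univ x), by simp⟩
      have hy : y ∈ l := List.mem_filter.mpr ⟨Finset.mem_toList.mpr (Finset.mem_univ y), by simp⟩
      have hall : ∀ a ∈ l, a = x ∨ a = y := fun a ha => by
        simpa using (List.mem_filter.mp ha).2
      rcases nodup_two hxy l hnd hall hx hy with h | h <;> rw [h] <;>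
        simp [List.Chain', hxy, hxy.symm]
    · have hv : v ∈ Finset.univ.toList := Finset.mem_toList.mpr (Finset.mem_univ v)
      have h1 : Finset.univ.toList.count v ≤ 1 :=
        List.nodup_iff_count_le_one.mp (Finset.nodup_toList _) v
      have h2 : 0 < Finset.univ.toList.count v := List.count_pos_iff.mpr hv
      omega
  · refine ⟨W ++ W.dedup, fun x y hxy => ?_, fun v => ?_⟩
    · rw [List.filter_append, filter_dedup_comm]
      set f := W.filter (fun a => decide (a = x ∨ a = y)) with hf
      have hcx : f.count x = k := by
        rw [hf, List.count_filter (by simp)]; exact hcount x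
      have hcy : f.count y = k := by
        rw [hf, List.count_filter (by simp)]; exact hcount y
      have hx : x ∈ f := List.count_pos_iff.mp (by omega)
      have hy : y ∈ f := List.count_pos_iff.mp (by omega)
      have hall : ∀ a ∈ f, a = x ∨ a = y := fun a ha => by
        simpa using (List.mem_filter.mp ha).2
      have hclass := nodup_two hxy f.dedup (List.nodup_dedup f)
        (fun a ha => hall a (List.mem_dedup.mp ha))
        (List.mem_dedup.mpr hx) (List.mem_dedup.mpr hy)
      rw [← hrep x y hxy, ← hf]
      constructor
      · intro hch
        exact (List.isChain_append.mp hch).1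
      · intro hch
        refine List.isChain_append.mpr ⟨hch, ?_, ?_⟩
        · rcases hclass with h | h <;> rw [h] <;> simp [hxy, hxy.symm]
        · intro a ha b hb
          have hgl : f.getLast? = f.dedup.getLast? := (getLast?_dedup f).symm
          rcases hclass with hcl | hcl <;> rw [hcl] at hb hgl <;>
            simp only [List.head?_cons, Option.mem_def, Option.some.injEq] at hb <;> subst hb
          · have ha' : f.getLast? = some y := by rw [hgl]; rfl
            rw [ha'] at ha
            simp only [Option.mem_def, Option.some.injEq] at ha
            subst ha; exact hxy.symm
          · have ha' : f.getLast? = some x := by rw [hgl]; rfl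
            rw [ha'] at ha
            simp only [Option.mem_def, Option.some.injEq] at ha
            subst ha; exact hxy
    · rw [List.count_append, hcount, List.count_dedup]
      have hv : v ∈ W := List.count_pos_iff.mp (by rw [hcount]; omega)
      simp [hv]
end

section
/- A graph G is word-representable if and only if it is k-word-representable for some k ≥ 1. -/
section Aux

variable {V : Type*} [DecidableEq V]

/-- Structure of an alternating word over a two-letter alphabet. -/
private lemma alt_aux (x y : V) (hxy : x ≠ y) :
    ∀ l : List V, (∀ a ∈ l, a = x ∨ a = y) → l.Chain' (· ≠ ·) →
      (l.count y ≤ l.count x + 1) ∧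
      (l.count y = l.count x + 1 → l.getLast? = some y) ∧
      (l.head? = some x → l.count y ≤ l.count x) ∧
      (l.head? = some x → l.count y = l.count x → l.getLast? = some y) := by
  intro l
  induction l with
  | nil => simp
  | cons a t ih =>
    intro hmem hch
    unfold List.Chain' at hch
    rw [List.isChain_cons] at hch
    obtain ⟨hhd, hch'⟩ := hch
    have hmem' : ∀ b ∈ t, b = x ∨ b = y := fun b hb => hmem b (List.mem_cons_of_mem _ hb)
    obtain ⟨A, B, C, D⟩ := ih hmem' hch'
    rcases hmem a (List.mem_cons_self (a := a) (l := t)) with ha | ha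
    · -- a = x
      have hay : ¬ a = y := by rw [ha]; exact hxy
      have hcx : (a :: t).count x = t.count x + 1 := by simp [List.count_cons, ha]
      have hcy : (a :: t).count y = t.count y := by simp [List.count_cons, hay]
      refine ⟨by omega, by intro h; omega, by intro _; omega, ?_⟩
      · intro _ h
        have h2 : t.count y = t.count x + 1 := by omega
        have h3 := B h2
        cases t with
        | nil => simp at h3
        | cons b t' => rw [List.getLast?_cons_cons]; exact h3
    · -- a = y
      have hax : ¬ a = x := by rw [ha]; exact hxy.symm
      have hcy : (a :: t).count y = t.count y + 1 := by simp [List.count_cons, ha]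
      have hcx : (a :: t).count x = t.count x := by simp [List.count_cons, hax]
      have hhead : t = [] ∨ t.head? = some x := by
        cases t with
        | nil => exact Or.inl rfl
        | cons b t' =>
          right
          have hb : b = x ∨ b = y := hmem' b (List.mem_cons_self (a := b) (l := t'))
          have hab : a ≠ b := hhd b rfl
          rcases hb with hb | hb
          · simp [hb]
          · exact absurd (by rw [ha, hb]) hab
      refine ⟨?_, ?_, ?_, ?_⟩
      · rcases hhead with h | h
        · subst h; simp at hcy hcx ⊢; omega
        · have := C h; omega
      · intro h
        rcases hhead with h' | h'
        · subst h'; simp [ha]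
        · have h2 : t.count y = t.count x := by omega
          have h3 := D h' h2
          cases t with
          | nil => simp at h3
          | cons b t' => rw [List.getLast?_cons_cons]; exact h3
      · intro h
        simp only [List.head?_cons, Option.some.injEq] at h
        exact absurd h hax
      · intro h
        simp only [List.head?_cons, Option.some.injEq] at h
        exact absurd h hax

/-- Among any nonempty set of letters occurring in `R`, there is one (the one whose
first occurrence is latest) such that pairwise-filtering `R` with any other member of
the set starts with that other member. -/
private lemma ex_good :
    ∀ (R : List V) (S : Finset V), S.Nonempty → (∀ v ∈ S, v ∈ R) →
      ∃ z ∈ S, ∀ y ∈ S, y ≠ z →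
        (R.filter (fun a => a = z ∨ a = y)).head? = some y := by
  intro R
  induction R with
  | nil =>
    intro S hS hsub
    obtain ⟨v, hv⟩ := hS
    exact absurd (hsub v hv) (by simp)
  | cons a R' ih =>
    intro S hS hsub
    by_cases haS : a ∈ S
    · by_cases hSa : ∀ y ∈ S, y = a
      · refine ⟨a, haS, ?_⟩
        intro y hy hne
        exact absurd (hSa y hy) hne
      · push_neg at hSa
        obtain ⟨b, hbS, hba⟩ := hSa
        have hS' : (S.erase a).Nonempty := ⟨b, Finset.mem_erase.mpr ⟨hba, hbS⟩⟩
        have hsub' : ∀ v ∈ S.erase a, v ∈ R' := by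
          intro v hv
          obtain ⟨hva, hvS⟩ := Finset.mem_erase.mp hv
          rcases List.mem_cons.mp (hsub v hvS) with h | h
          · exact absurd h hva
          · exact h
        obtain ⟨z, hz, hgood⟩ := ih _ hS' hsub'
        obtain ⟨hza, hzS⟩ := Finset.mem_erase.mp hz
        refine ⟨z, hzS, ?_⟩
        intro y hy hne
        by_cases hya : y = a
        · subst hya
          rw [List.filter_cons, if_pos (by simp)]
          simp
        · have hy' : y ∈ S.erase a := Finset.mem_erase.mpr ⟨hya, hy⟩
          rw [List.filter_cons, if_neg (by
            simp only [decide_eq_true_eq]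
            push_neg
            exact ⟨fun h => hza h.symm, fun h => hya h.symm⟩)]
          exact hgood y hy' hne
    · have hsub' : ∀ v ∈ S, v ∈ R' := by
        intro v hv
        rcases List.mem_cons.mp (hsub v hv) with h | h
        · exact absurd (by rw [← h]; exact hv) haS
        · exact h
      obtain ⟨z, hz, hgood⟩ := ih S hS hsub'
      refine ⟨z, hz, ?_⟩
      intro y hy hne
      rw [List.filter_cons, if_neg (by
        simp only [decide_eq_true_eq]
        push_neg
        refine ⟨fun h => absurd (by rw [h]; exact hz : a ∈ S) haS,
          fun h => absurd (by rw [h]; exact hy : a ∈ S) haS⟩)]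
      exact hgood y hy hne

/-- Appending a letter `z` at the end is safe provided, for every neighbour `y` of `z`,
the `{z,y}`-restriction of `W` ends with `y`. -/
private lemma append_represents {W : List V} {G : SimpleGraph V}
    (hW : WordRepresents W G) (z : V)
    (hz : ∀ y, G.Adj z y → (W.filter (fun a => a = z ∨ a = y)).getLast? = some y) :
    WordRepresents (W ++ [z]) G := by
  intro x y hxy
  rw [List.filter_append]
  by_cases hzx : z = x
  · subst hzx
    have hf : [z].filter (fun a => decide (a = z ∨ a = y)) = [z] := by simp
    rw [hf]
    constructor
    · intro h
      exact (hW z y hxy).mp (List.isChain_append.mp h).1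
    · intro h
      unfold List.Chain'
      rw [List.isChain_append]
      refine ⟨(hW z y hxy).mpr h, List.isChain_singleton _, ?_⟩
      intro a ha b hb
      simp only [List.head?_cons, Option.mem_def, Option.some.injEq] at hb
      subst hb
      rw [Option.mem_def, hz y h, Option.some.injEq] at ha
      subst ha
      exact hxy.symm
  · by_cases hzy : z = y
    · subst hzy
      have hf : [z].filter (fun a => decide (a = x ∨ a = z)) = [z] := by simp
      rw [hf]
      constructor
      · intro h
        exact (hW x z hxy).mp (List.isChain_append.mp h).1
      · intro h
        unfold List.Chain'
        rw [List.isChain_append]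
        refine ⟨(hW x z hxy).mpr h, List.isChain_singleton _, ?_⟩
        intro a ha b hb
        simp only [List.head?_cons, Option.mem_def, Option.some.injEq] at hb
        subst hb
        have hc : W.filter (fun a => decide (a = z ∨ a = x)) =
            W.filter (fun a => decide (a = x ∨ a = z)) := by
          apply List.filter_congr
          intro b _
          exact decide_eq_decide.mpr or_comm
        have hlast := hz x h.symm
        rw [hc] at hlast
        rw [Option.mem_def, hlast, Option.some.injEq] at ha
        subst ha
        exact hxy
    · have hf : [z].filter (fun a => decide (a = x ∨ a = y)) = [] := by
        simp [hzx, hzy]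
      rw [hf, List.append_nil]
      exact hW x y hxy

end Aux

section Main

variable {V : Type*} [Fintype V] [DecidableEq V]

private lemma uniformize (G : SimpleGraph V) (k : ℕ) :
    ∀ (n : ℕ) (W : List V), WordRepresents W G → (∀ v : V, v ∈ W) →
      (∀ v : V, W.count v ≤ k) → (∑ v : V, (k - W.count v)) = n →
      ∃ W' : List V, WordRepresents W' G ∧ ∀ v : V, W'.count v = k := by
  intro n
  induction n with
  | zero =>
    intro W hrep hmem hle hsum
    refine ⟨W, hrep, fun v => ?_⟩
    have h0 : k - W.count v = 0 :=
      Finset.sum_eq_zero_iff.mp hsum v (Finset.mem_univ v)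
    have := hle v
    omega
  | succ n ih =>
    intro W hrep hmem hle hsum
    set S : Finset V := Finset.univ.filter (fun v => W.count v < k) with hSdef
    have hSne : S.Nonempty := by
      by_contra h
      rw [Finset.not_nonempty_iff_eq_empty] at h
      have hzero : (∑ v : V, (k - W.count v)) = 0 := by
        apply Finset.sum_eq_zero
        intro v _
        have hv : v ∉ S := by rw [h]; exact Finset.notMem_empty v
        simp only [hSdef, Finset.mem_filter, Finset.mem_univ, true_and, not_lt] at hv
        omega
      omega
    obtain ⟨z, hzS, hgood⟩ := ex_good W.reverse S hSne
      (fun v _ => List.mem_reverse.mpr (hmem v))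
    have hzlt : W.count z < k := by
      simpa [hSdef] using (Finset.mem_filter.mp hzS).2
    have happ : ∀ y, G.Adj z y →
        (W.filter (fun a => a = z ∨ a = y)).getLast? = some y := by
      intro y hadj
      have hne : z ≠ y := G.ne_of_adj hadj
      by_cases hy : W.count y < k
      · have hyS : y ∈ S := by simp [hSdef, hy]
        have h1 := hgood y hyS hne.symm
        rw [List.filter_reverse, List.head?_reverse] at h1
        exact h1
      · have hyk : W.count y = k := le_antisymm (hle y) (not_lt.mp hy)
        have hchain : (W.filter (fun a => decide (a = z ∨ a = y))).Chain' (· ≠ ·) :=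
          (hrep z y hne).mpr hadj
        have hmem' : ∀ a ∈ W.filter (fun a => decide (a = z ∨ a = y)), a = z ∨ a = y := by
          intro a ha
          have := (List.mem_filter.mp ha).2
          simpa using this
        obtain ⟨A, B, -, -⟩ := alt_aux z y hne _ hmem' hchain
        have hcz : (W.filter (fun a => decide (a = z ∨ a = y))).count z = W.count z :=
          List.count_filter (by simp)
        have hcy : (W.filter (fun a => decide (a = z ∨ a = y))).count y = W.count y :=
          List.count_filter (by simp)
        exact B (by omega)
    have hrep' : WordRepresents (W ++ [z]) G := append_represents hrep z happ
    have hcount : ∀ v : V, (W ++ [z]).count v = W.count v + if v = z then 1 else 0 := by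
      intro v
      rw [List.count_append]
      by_cases hv : v = z
      · subst hv; simp
      · simp [hv, Ne.symm hv]
    apply ih (W ++ [z]) hrep'
    · intro v
      exact List.mem_append.mpr (Or.inl (hmem v))
    · intro v
      rw [hcount v]
      by_cases hv : v = z
      · subst hv; simp; omega
      · rw [if_neg hv]; have := hle v; omega
    · have e1 : (∑ v : V, (k - W.count v)) =
          (k - W.count z) + ∑ v ∈ Finset.univ.erase z, (k - W.count v) :=
        (Finset.add_sum_erase Finset.univ (fun v => k - W.count v) (Finset.mem_univ z)).symm
      have e2 : (∑ v : V, (k - (W ++ [z]).count v)) =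
          (k - (W ++ [z]).count z) + ∑ v ∈ Finset.univ.erase z, (k - (W ++ [z]).count v) :=
        (Finset.add_sum_erase Finset.univ (fun v => k - (W ++ [z]).count v)
          (Finset.mem_univ z)).symm
      have heq : ∑ v ∈ Finset.univ.erase z, (k - (W ++ [z]).count v)
          = ∑ v ∈ Finset.univ.erase z, (k - W.count v) := by
        apply Finset.sum_congr rfl
        intro v hv
        have hvz : v ≠ z := (Finset.mem_erase.mp hv).1
        rw [hcount v, if_neg hvz]
        omega
      have hz1 : (W ++ [z]).count z = W.count z + 1 := by
        rw [hcount z, if_pos rfl]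
      rw [heq, hz1] at e2
      omega

end Main

/-- A graph `G` is word-representable (some word containing every letter at least once
represents it) iff it is `k`-word-representable for some `k ≥ 1`. -/
theorem wordRepresentable_iff_kWordRepresentable {V : Type*} [Fintype V] [DecidableEq V]
    (G : SimpleGraph V) :
    (∃ W : List V, (∀ v : V, v ∈ W) ∧ WordRepresents W G) ↔
      ∃ k : ℕ, 1 ≤ k ∧ ∃ W : List V, WordRepresents W G ∧ ∀ v : V, W.count v = k := by
  constructor
  · rintro ⟨W, hmem, hrep⟩
    set k : ℕ := max (Finset.univ.sup fun v => W.count v) 1 with hk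
    have hk1 : 1 ≤ k := le_max_right _ _
    have hle : ∀ v : V, W.count v ≤ k := by
      intro v
      have h1 : W.count v ≤ Finset.univ.sup (fun v => W.count v) :=
        Finset.le_sup (f := fun v => W.count v) (Finset.mem_univ v)
      exact le_trans h1 (le_max_left _ _)
    obtain ⟨W', hrep', hcount⟩ :=
      uniformize G k (∑ v : V, (k - W.count v)) W hrep hmem hle rfl
    exact ⟨k, hk1, W', hrep', hcount⟩
  · rintro ⟨k, hk, W, hrep, hcount⟩
    refine ⟨W, fun v => ?_, hrep⟩
    have : 0 < W.count v := by rw [hcount v]; omega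
    exact List.count_pos_iff.mp this
end

section
/- Every general d-word-representable graph is also general (d+1)-word-representable. -/
/-- Letters `a` and `b` are `d`-intersecting in `W`: `W` contains an alternating
subsequence in the letters `a`, `b` of length at least `d + 2`. -/
def DIntersecting {V : Type*} (d : ℕ) (W : List V) (a b : V) : Prop :=
  ∃ l : List V, l.Sublist W ∧ l.Chain' (· ≠ ·) ∧ (∀ c ∈ l, c = a ∨ c = b) ∧
    d + 2 ≤ l.length

/-- `W` general `d`-word-represents `G`: distinct letters are `d`-intersecting in `W`
iff they are adjacent in `G`. -/
def GenWordRepresents {V : Type*} (d : ℕ) (W : List V) (G : SimpleGraph V) : Prop :=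
  ∀ x y : V, x ≠ y → (DIntersecting d W x y ↔ G.Adj x y)

private lemma split_first {V : Type*} {l : List V} {a : V} (h : a ∈ l) :
    ∃ s t, l = s ++ a :: t ∧ a ∉ s := by
  induction l with
  | nil => simp at h
  | cons b l ih =>
    by_cases hb : a = b
    · exact ⟨[], l, by simp [hb], by simp⟩
    · obtain ⟨s, t, hst, hs⟩ := ih (by
        rcases List.mem_cons.mp h with h' | h'
        · exact absurd h' hb
        · exact h')
      exact ⟨b :: s, t, by simp [hst], by simp [hs, hb]⟩

private lemma split_last {V : Type*} {l : List V} {a : V} (h : a ∈ l) :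
    ∃ s t, l = s ++ a :: t ∧ a ∉ t := by
  obtain ⟨s, t, hst, hs⟩ := split_first (l := l.reverse) (a := a) (by simpa using h)
  refine ⟨t.reverse, s.reverse, ?_, by simpa using hs⟩
  have := congrArg List.reverse hst
  simpa using this

private lemma dedup_order {V : Type*} [DecidableEq V] {R : List V} {a b : V}
    (h : [b, a].Sublist R.dedup) :
    ∃ p q, R = p ++ a :: q ∧ b ∈ p ∧ b ∉ q ∧ a ∉ q := by
  induction R with
  | nil => simp [List.dedup_nil] at h
  | cons c R ih =>
    by_cases hc : c ∈ R
    · rw [List.dedup_cons_of_mem hc] at h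
      obtain ⟨p, q, hpq, hbp, hbq, haq⟩ := ih h
      exact ⟨c :: p, q, by simp [hpq], by simp [hbp], hbq, haq⟩
    · rw [List.dedup_cons_of_notMem hc] at h
      cases h with
      | cons _ h' =>
        obtain ⟨p, q, hpq, hbp, hbq, haq⟩ := ih h'
        exact ⟨c :: p, q, by simp [hpq], by simp [hbp], hbq, haq⟩
      | cons_cons _ h' =>
        have haR : a ∈ R := List.mem_dedup.mp (List.singleton_sublist.mp h')
        obtain ⟨s, t, hst, hat⟩ := split_last haR
        refine ⟨b :: s, t, by simp [hst], by simp, ?_, hat⟩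
        intro hbt
        exact hc (by rw [hst]; exact List.mem_append.mpr (Or.inr (List.mem_cons_of_mem _ hbt)))

private lemma key_lemma {V : Type*} [DecidableEq V] {W : List V} {a b : V} (hab : a ≠ b)
    (h : [b, a].Sublist W.reverse.dedup) {t : List V} (ht : (b :: t).Sublist W) :
    (a :: b :: t).Sublist W := by
  obtain ⟨p, q, hpq, hbp, hbq, haq⟩ := dedup_order h
  have hW : W = q.reverse ++ a :: p.reverse := by
    have := congrArg List.reverse hpq
    simpa using this
  rw [hW] at ht ⊢
  obtain ⟨u, v, huv, hu, hv⟩ := List.sublist_append_iff.mp ht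
  have hu0 : u = [] := by
    cases u with
    | nil => rfl
    | cons c u' =>
      exfalso
      have : c = b := by
        have := congrArg (fun l => l.head?) huv
        simpa using this.symm
      subst this
      exact hbq (by simpa using hu.subset List.mem_cons_self)
  subst hu0
  simp only [List.nil_append] at huv
  subst huv
  have hv' : (b :: t).Sublist p.reverse := by
    cases hv with
    | cons _ h'' => exact h''
    | cons_cons _ h'' => exact absurd rfl hab
  exact (hv'.cons₂ a).trans (List.sublist_append_right _ _)

/-- Every general `d`-word-representable graph is general `(d+1)`-word-representable. -/
theorem genWordRepresentable_succ {V : Type*} (G : SimpleGraph V) (d : ℕ)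
    (h : ∃ W : List V, GenWordRepresents d W G) :
    ∃ W : List V, GenWordRepresents (d + 1) W G := by
  classical
  obtain ⟨W, hW⟩ := h
  refine ⟨W.reverse.dedup ++ W, ?_⟩
  intro x y hxy
  constructor
  · rintro ⟨l, hsub, hchain, hmem, hlen⟩
    rw [← hW x y hxy]
    obtain ⟨l₁, l₂, rfl, h₁, h₂⟩ := List.sublist_append_iff.mp hsub
    have hnd : l₁.Nodup := (List.nodup_dedup _).sublist h₁
    match l₁, hnd, h₁ with
    | [], _, _ =>
      refine ⟨l₂, h₂, by simpa using hchain, fun c hc => hmem c (by simp [hc]), by simp at hlen; omega⟩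
    | [c], _, _ =>
      refine ⟨l₂, h₂, (by simpa using hchain : List.Chain' _ (c :: l₂)).tail,
        fun c hc => hmem c (by simp [hc]), by simp at hlen; omega⟩
    | c :: e :: rest, hnd, h₁ =>
      -- rest must be empty
      have hce : c ≠ e := by simp [List.nodup_cons] at hnd; tauto
      have hrest : rest = [] := by
        rcases rest with _ | ⟨g, rest'⟩
        · rfl
        · exfalso
          have hcm := hmem c (by simp)
          have hem := hmem e (by simp)
          have hgm := hmem g (by simp)
          simp [List.nodup_cons] at hnd
          rcases hcm with rfl | rfl <;> rcases hem with rfl | rfl <;>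
            rcases hgm with rfl | rfl <;> tauto
      subst hrest
      rcases l₂ with _ | ⟨f, t⟩
      · exfalso; simp at hlen
      · have hchain' : c ≠ e ∧ e ≠ f ∧ List.Chain' (· ≠ ·) (f :: t) := by
          simpa [List.Chain', List.isChain_cons_cons] using hchain
        have hf : f = c := by
          have hcm := hmem c (by simp)
          have hem := hmem e (by simp)
          have hfm := hmem f (by simp)
          rcases hcm with rfl | rfl <;> rcases hem with rfl | rfl <;>
            rcases hfm with rfl | rfl <;> tauto
        subst hf
        have hkey : (e :: f :: t).Sublist W := key_lemma (Ne.symm hce) h₁ h₂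
        refine ⟨e :: f :: t, hkey, ?_, ?_, ?_⟩
        · exact List.isChain_cons_cons.mpr ⟨Ne.symm hce, hchain'.2.2⟩
        · intro z hz
          rcases List.mem_cons.mp hz with rfl | hz'
          · exact hmem z (by simp)
          · exact hmem z (by simp [hz'])
        · simp at hlen ⊢; omega
  · intro hadj
    obtain ⟨l, hsub, hchain, hmem, hlen⟩ := (hW x y hxy).mpr hadj
    rcases l with _ | ⟨p, l'⟩
    · simp at hlen
    rcases l' with _ | ⟨q, r⟩
    · simp at hlen
    have hpq : p ≠ q := (List.isChain_cons_cons.mp hchain).1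
    have hqP : q ∈ W.reverse.dedup := by
      rw [List.mem_dedup, List.mem_reverse]
      exact hsub.subset (by simp)
    refine ⟨q :: p :: q :: r, ?_, ?_, ?_, ?_⟩
    · have h1 : [q].Sublist W.reverse.dedup := List.singleton_sublist.mpr hqP
      simpa using h1.append hsub
    · exact List.isChain_cons_cons.mpr ⟨Ne.symm hpq, hchain⟩
    · intro z hz
      rcases List.mem_cons.mp hz with rfl | hz'
      · exact hmem z (by simp)
      · exact hmem z hz'
    · simp at hlen ⊢; omega
end

section
/- Every finite graph G = (V,E) with m = |E| edges is general d-word-representable for every d ≥ m − 1. Concretely, the concatenation W = W₁W₂⋯W_m, where W_i is an alternating word of length d + 2 in the two letters of the i-th edge e_i, is a general d-word-representant of G. -/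
/-- The alternating word `abab…` of length `n` in the letters `a`, `b`. -/
def altWord {V : Type*} (a b : V) (n : ℕ) : List V :=
  (List.range n).map (fun k => if k % 2 = 0 then a else b)

lemma altWord_length {V : Type*} (a b : V) (n : ℕ) : (altWord a b n).length = n := by
  simp [altWord]

lemma altWord_mem {V : Type*} {a b c : V} {n : ℕ} (h : c ∈ altWord a b n) :
    c = a ∨ c = b := by
  simp only [altWord, List.mem_map, List.mem_range] at h
  obtain ⟨k, -, hk⟩ := h
  split at hk <;> [left; right] <;> exact hk.symm

lemma altWord_chain' {V : Type*} {a b : V} (hab : a ≠ b) (n : ℕ) :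
    (altWord a b n).Chain' (· ≠ ·) := by
  simp only [List.Chain', List.isChain_iff_getElem]
  intro i hi
  have hlen : (altWord a b n).length = n := altWord_length a b n
  simp only [altWord, List.get_eq_getElem, List.getElem_map, List.getElem_range]
  rcases Nat.even_or_odd i with he | ho
  · have h1 : i % 2 = 0 := Nat.even_iff.mp he
    have h2 : (i + 1) % 2 ≠ 0 := by omega
    simp [h1, h2, hab]
  · have h1 : i % 2 ≠ 0 := by have := Nat.odd_iff.mp ho; omega
    have h2 : (i + 1) % 2 = 0 := by have := Nat.odd_iff.mp ho; omega
    simp [h1, h2, hab.symm]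

lemma length_le_one_of_allEq {V : Type*} {l : List V}
    (hc : l.Chain' (· ≠ ·)) (h : ∀ c ∈ l, ∀ c' ∈ l, c = c') : l.length ≤ 1 := by
  match l with
  | [] => simp
  | [_] => simp
  | a :: b :: t =>
    exact absurd (h a (by simp) b (by simp)) (List.isChain_cons_cons.mp hc).1

lemma count_lemma {V : Type*} {x y : V} (hxy : x ≠ y) (d : ℕ) :
    ∀ (es : List (V × V)) (l : List V),
      (∀ p ∈ es, p.1 ≠ p.2) →
      (∀ p ∈ es, ¬((p.1 = x ∧ p.2 = y) ∨ (p.1 = y ∧ p.2 = x))) →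
      l.Sublist ((es.map fun p => altWord p.1 p.2 (d + 2)).flatten) →
      l.Chain' (· ≠ ·) → (∀ c ∈ l, c = x ∨ c = y) → l.length ≤ es.length := by
  intro es
  induction es with
  | nil =>
    intro l _ _ hs _ _
    simp only [List.map_nil, List.flatten_nil, List.sublist_nil] at hs
    simp [hs]
  | cons p es ih =>
    intro l h1 h2 hs hc hm
    rw [List.map_cons, List.flatten_cons, List.sublist_append_iff] at hs
    obtain ⟨l₁, l₂, rfl, hs1, hs2⟩ := hs
    have hcc := List.isChain_append.mp hc
    have hne : p.1 ≠ p.2 := h1 p (List.mem_cons_self)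
    have hp : ¬((p.1 = x ∧ p.2 = y) ∨ (p.1 = y ∧ p.2 = x)) :=
      h2 p (List.mem_cons_self)
    have hl1 : l₁.length ≤ 1 := by
      apply length_le_one_of_allEq hcc.1
      intro c hcm c' hcm'
      have m1 := altWord_mem (hs1.subset hcm)
      have m1' := altWord_mem (hs1.subset hcm')
      have m2 := hm c (List.mem_append_left _ hcm)
      have m2' := hm c' (List.mem_append_left _ hcm')
      clear ih hm hc hs1 hs2 hcm hcm' h1 h2
      rcases m2 with rfl | rfl <;> rcases m2' with rfl | rfl <;>
        rcases m1 with h | h <;> rcases m1' with h' | h' <;>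
        first
        | rfl
        | exact h.trans h'.symm
        | (exfalso; apply hp; tauto)
    have hl2 : l₂.length ≤ es.length :=
      ih l₂ (fun q hq => h1 q (List.mem_cons_of_mem _ hq))
        (fun q hq => h2 q (List.mem_cons_of_mem _ hq)) hs2 hcc.2.1
        (fun c hc => hm c (List.mem_append_right _ hc))
    simp only [List.length_append, List.length_cons]
    omega

theorem genWordRepresentable_of_edgeList' {V : Type*} (G : SimpleGraph V)
    (es : List (V × V))
    (h1 : ∀ p ∈ es, p.1 ≠ p.2)
    (h2 : es.Pairwise (fun p q => ¬(p = q ∨ p = (q.2, q.1))))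
    (h3 : ∀ x y : V, x ≠ y → (G.Adj x y ↔
      ∃ p ∈ es, (p.1 = x ∧ p.2 = y) ∨ (p.1 = y ∧ p.2 = x)))
    (d : ℕ) (hd : es.length - 1 ≤ d) :
    ∀ x y : V, x ≠ y →
      ((∃ l : List V, l.Sublist ((es.map (fun p => altWord p.1 p.2 (d + 2))).flatten) ∧
        l.Chain' (· ≠ ·) ∧ (∀ c ∈ l, c = x ∨ c = y) ∧ d + 2 ≤ l.length) ↔ G.Adj x y) := by
  intro x y hxy
  constructor
  · rintro ⟨l, hs, hc, hm, hlen⟩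
    by_contra hadj
    have hno : ∀ p ∈ es, ¬((p.1 = x ∧ p.2 = y) ∨ (p.1 = y ∧ p.2 = x)) := by
      intro p hp hcon
      exact hadj ((h3 x y hxy).mpr ⟨p, hp, hcon⟩)
    have := count_lemma hxy d es l h1 hno hs hc hm
    omega
  · intro hadj
    obtain ⟨p, hp, hcase⟩ := (h3 x y hxy).mp hadj
    refine ⟨altWord p.1 p.2 (d + 2), ?_, altWord_chain' (h1 p hp) _, ?_, by
      rw [altWord_length]⟩
    · exact List.sublist_flatten_of_mem (List.mem_map_of_mem hp)
    · intro c hcm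
      rcases altWord_mem hcm with rfl | rfl <;> tauto

/-- Every finite graph `G` with `m` edges, listed as pairs `es` (each edge occurring exactly
once), is general `d`-word-representable for every `d ≥ m - 1`; concretely, the concatenation
of alternating words of length `d + 2`, one in the two letters of each edge, is a general
`d`-word-representant of `G`. -/
theorem genWordRepresentable_of_edgeList {V : Type*} (G : SimpleGraph V)
    (es : List (V × V))
    (h1 : ∀ p ∈ es, p.1 ≠ p.2)
    (h2 : es.Pairwise (fun p q => ¬(p = q ∨ p = (q.2, q.1))))
    (h3 : ∀ x y : V, x ≠ y → (G.Adj x y ↔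
      ∃ p ∈ es, (p.1 = x ∧ p.2 = y) ∨ (p.1 = y ∧ p.2 = x)))
    (d : ℕ) (hd : es.length - 1 ≤ d) :
    GenWordRepresents d ((es.map (fun p => altWord p.1 p.2 (d + 2))).flatten) G := by
  exact genWordRepresentable_of_edgeList' G es h1 h2 h3 d hd
end

section
/- In the concatenated word W = W₁W₂⋯W_m, where each W_i is an alternating word of length L in a two-letter alphabet e_i and the e_i are pairwise distinct 2-element sets, any alternating subsequence of W in letters {x,y} with {x,y} ∉ {e₁,…,e_m} has length at most m. -/
/-- In the concatenation `W = W₁ ⋯ W_m` of blocks `W_i`, where `W_i` is an alternating word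
of length `L` over the two-letter alphabet `e_i` and the `e_i` are pairwise distinct
2-element sets, every alternating subsequence of `W` in letters `{x, y}` with `{x, y}`
different from all `e_i` has length at most `m`. -/
theorem alt_subseq_le_blocks {V : Type*} (es : List (V × V)) (Bs : List (List V)) (L : ℕ)
    (h1 : ∀ p ∈ es, p.1 ≠ p.2)
    (h2 : es.Pairwise (fun p q => ¬(p = q ∨ p = (q.2, q.1))))
    (hB : List.Forall₂ (fun (p : V × V) (B : List V) =>
      B.length = L ∧ B.Chain' (· ≠ ·) ∧ ∀ c ∈ B, c = p.1 ∨ c = p.2) es Bs)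
    (x y : V) (hxy : x ≠ y)
    (hnot : ∀ p ∈ es, ¬((p.1 = x ∧ p.2 = y) ∨ (p.1 = y ∧ p.2 = x))) :
    ∀ l : List V, l.Sublist Bs.flatten → l.Chain' (· ≠ ·) → (∀ c ∈ l, c = x ∨ c = y) →
      l.length ≤ es.length := by
  clear h1 h2
  induction hB with
  | nil =>
    intro l hs _ _
    simp only [List.flatten_nil, List.sublist_nil] at hs
    simp [hs]
  | @cons p B es' Bs' hpB _ ih =>
    intro l hs hc hmem
    have hnotp := hnot p List.mem_cons_self
    simp only [List.flatten_cons] at hs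
    rw [List.sublist_append_iff] at hs
    obtain ⟨l₁, l₂, rfl, hs₁, hs₂⟩ := hs
    unfold List.Chain' at hc
    rw [List.isChain_append] at hc
    have h₂ : l₂.length ≤ es'.length := by
      refine ih (fun q hq => hnot q (List.mem_cons_of_mem _ hq)) l₂ hs₂ hc.2.1
        (fun c hc' => hmem c (List.mem_append_right _ hc'))
    have h₁ : l₁.length ≤ 1 := by
      rcases l₁ with _ | ⟨a, _ | ⟨b, t⟩⟩
      · simp
      · simp
      · exfalso
        have hab : a ≠ b := (List.isChain_cons_cons.mp hc.1).1
        have haB := hs₁.subset List.mem_cons_self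
        have hbB := hs₁.subset (List.mem_cons_of_mem _ List.mem_cons_self)
        have haxy : a = x ∨ a = y := hmem a (by simp)
        have hbxy : b = x ∨ b = y := hmem b (by simp)
        have hap := hpB.2.2 a haB
        have hbp := hpB.2.2 b hbB
        apply hnotp
        clear hnot hnotp hmem hc hs₁ hs₂ h₂ ih hpB
        rcases haxy with rfl | rfl <;> rcases hbxy with rfl | rfl <;>
          rcases hap with h1 | h1 <;> rcases hbp with h2 | h2 <;> simp_all <;> tauto
    simp only [List.length_append, List.length_cons]
    omega
end

section
/- A graph G (with at least 2 vertices) is a polygon-circle graph if and only if G is general 2-word-representable. -/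
/-- `a, b, c, d` occur in this cyclic order on the circle `Fin n`. -/
def CyclicOrder4 {n : ℕ} (a b c d : Fin n) : Prop :=
  (a < b ∧ b < c ∧ c < d) ∨ (b < c ∧ c < d ∧ d < a) ∨
  (c < d ∧ d < a ∧ a < b) ∨ (d < a ∧ a < b ∧ b < c)

/-- `G` is a polygon-circle graph: it is the intersection graph of a family of (nonempty,
vertex-disjoint) convex polygons inscribed in a circle, two polygons intersecting iff their
vertex sets interleave on the circle. -/
def IsPolygonCircle {V : Type*} (G : SimpleGraph V) : Prop :=
  ∃ (n : ℕ) (P : V → Finset (Fin n)),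
    (∀ v, (P v).Nonempty) ∧
    (∀ u v : V, u ≠ v → Disjoint (P u) (P v)) ∧
    (∀ x y : V, x ≠ y → (G.Adj x y ↔
      ∃ a ∈ P x, ∃ c ∈ P x, ∃ b ∈ P y, ∃ d ∈ P y, CyclicOrder4 a b c d))

open List

private lemma list_len4 {α : Type*} {l : List α} (h : l.length = 4) :
    ∃ a b c d, l = [a, b, c, d] := by
  obtain ⟨a, l, rfl⟩ := l.exists_of_length_succ h
  have h1 : l.length = 3 := by simpa using h
  obtain ⟨b, l, rfl⟩ := l.exists_of_length_succ h1
  have h2 : l.length = 2 := by simpa using h1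
  obtain ⟨c, l, rfl⟩ := l.exists_of_length_succ h2
  have h3 : l.length = 1 := by simpa using h2
  obtain ⟨d, l, rfl⟩ := l.exists_of_length_succ h3
  have h4 : l = [] := by simpa [List.length_eq_zero_iff] using h3
  exact ⟨a, b, c, d, by rw [h4]⟩

private lemma sublist4_of_get {V : Type*} (W : List V) {i1 i2 i3 i4 : Fin W.length}
    (h12 : i1 < i2) (h23 : i2 < i3) (h34 : i3 < i4) :
    [W.get i1, W.get i2, W.get i3, W.get i4] <+ W := by
  rw [List.sublist_iff_exists_fin_orderEmbedding_get_eq]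
  have hmono : StrictMono (fun j : Fin 4 => ![i1, i2, i3, i4] j) := by
    intro a b hab
    fin_cases a <;> fin_cases b <;>
      simp_all [Matrix.cons_val_zero, Matrix.cons_val_one] <;>
      first
        | exact h12 | exact h23 | exact h34
        | exact h12.trans h23 | exact h23.trans h34 | exact (h12.trans h23).trans h34
  exact ⟨OrderEmbedding.ofStrictMono _ hmono, by intro ix; fin_cases ix <;> rfl⟩

private lemma get_of_sublist4 {V : Type*} {W : List V} {a b c d : V}
    (h : [a, b, c, d] <+ W) :
    ∃ i1 i2 i3 i4 : Fin W.length, i1 < i2 ∧ i2 < i3 ∧ i3 < i4 ∧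
      W.get i1 = a ∧ W.get i2 = b ∧ W.get i3 = c ∧ W.get i4 = d := by
  rw [List.sublist_iff_exists_fin_orderEmbedding_get_eq] at h
  obtain ⟨f, hf⟩ := h
  exact ⟨f ⟨0, by norm_num⟩, f ⟨1, by norm_num⟩, f ⟨2, by norm_num⟩, f ⟨3, by norm_num⟩,
    f.strictMono (by simp [Fin.mk_lt_mk]), f.strictMono (by simp [Fin.mk_lt_mk]),
    f.strictMono (by simp [Fin.mk_lt_mk]),
    (hf ⟨0, by norm_num⟩).symm, (hf ⟨1, by norm_num⟩).symm,
    (hf ⟨2, by norm_num⟩).symm, (hf ⟨3, by norm_num⟩).symm⟩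

private lemma sublist4_finRange {n : ℕ} {p1 p2 p3 p4 : Fin n}
    (h12 : p1 < p2) (h23 : p2 < p3) (h34 : p3 < p4) :
    [p1, p2, p3, p4] <+ List.finRange n := by
  have hlen : n = (List.finRange n).length := (List.length_finRange (n := n)).symm
  have h := sublist4_of_get (List.finRange n)
    (i1 := Fin.cast hlen p1) (i2 := Fin.cast hlen p2) (i3 := Fin.cast hlen p3)
    (i4 := Fin.cast hlen p4) h12 h23 h34
  simpa using h

private lemma exists_map_of_filterMap {α β : Type*} (f : α → Option β) :
    ∀ (l : List α) (s : List β), l.filterMap f = s →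
      ∃ l' : List α, l' <+ l ∧ l'.map f = s.map Option.some := by
  intro l
  induction l with
  | nil => rintro s hs; exact ⟨[], by simp, by simp [← hs]⟩
  | cons a t ih =>
    rintro s hs
    rw [List.filterMap_cons] at hs
    cases hfa : f a with
    | none =>
      rw [hfa] at hs
      obtain ⟨l', hl, hm⟩ := ih s hs
      exact ⟨l', hl.cons a, hm⟩
    | some b =>
      rw [hfa] at hs
      subst hs
      obtain ⟨l', hl, hm⟩ := ih (t.filterMap f) rfl
      exact ⟨a :: l', hl.cons₂ a, by simp [hfa, hm]⟩

private lemma dInter_iff {V : Type*} {W : List V} {x y : V} (hxy : x ≠ y) :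
    DIntersecting 2 W x y ↔ ([x, y, x, y] <+ W ∨ [y, x, y, x] <+ W) := by
  constructor
  · rintro ⟨l, hsub, hch, hmem, hlen⟩
    have hl4 : (l.take 4).length = 4 := by simp [List.length_take]; omega
    obtain ⟨a, b, c, d, heq⟩ := list_len4 hl4
    have hch4 : (l.take 4).Chain' (· ≠ ·) := hch.take 4
    have hsub4 : l.take 4 <+ W := (l.take_sublist 4).trans hsub
    have hmem4 : ∀ c' ∈ l.take 4, c' = x ∨ c' = y :=
      fun c' hc' => hmem c' ((l.take_sublist 4).subset hc')
    rw [heq] at hch4 hsub4 hmem4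
    have ha := hmem4 a (by simp)
    have hb := hmem4 b (by simp)
    have hc := hmem4 c (by simp)
    have hd := hmem4 d (by simp)
    simp only [List.Chain', List.isChain_cons_cons, List.isChain_singleton, and_true] at hch4
    obtain ⟨hab, hbc, hcd⟩ := hch4
    rcases ha with rfl | rfl <;> rcases hb with rfl | rfl <;>
      rcases hc with rfl | rfl <;> rcases hd with rfl | rfl <;>
      first
        | exact Or.inl hsub4
        | exact Or.inr hsub4
        | simp_all
  · rintro (h | h)
    · exact ⟨[x, y, x, y], h, by simp [List.Chain', List.isChain_cons_cons, hxy, hxy.symm], by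
        intro c hc; simp at hc; tauto, by simp⟩
    · exact ⟨[y, x, y, x], h, by simp [List.Chain', List.isChain_cons_cons, hxy, hxy.symm], by
        intro c hc; simp at hc; tauto, by simp⟩

private lemma sublist_of_append_nodup {V : Type*} {W L : List V} {s : List V}
    (h : s <+ W ++ L) (hs : ∀ v ∈ s, v ∉ L) : s <+ W := by
  rw [List.sublist_append_iff] at h
  obtain ⟨l1, l2, rfl, h1, h2⟩ := h
  cases l2 with
  | nil => simpa using h1
  | cons a t => exact absurd (h2.subset List.mem_cons_self) (hs a (by simp))

/-- A graph with at least two vertices is a polygon-circle graph iff it is general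
`2`-word-representable. -/
theorem polygonCircle_iff_gen2WordRepresentable {V : Type*} [Fintype V]
    (G : SimpleGraph V) (hV : 2 ≤ Fintype.card V) :
    IsPolygonCircle G ↔ ∃ W : List V, GenWordRepresents 2 W G := by
  classical
  constructor
  · rintro ⟨n, P, hne, hdisj, hadj⟩
    set f : Fin n → Option V := fun i => if h : ∃ v, i ∈ P v then some h.choose else none
      with hfdef
    have hf : ∀ (i : Fin n) (v : V), f i = some v ↔ i ∈ P v := by
      intro i v
      constructor
      · intro h
        by_cases hex : ∃ u, i ∈ P u
        · rw [hfdef] at h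
          simp only [hex, dif_pos, Option.some.injEq] at h
          exact h ▸ hex.choose_spec
        · simp [hfdef, hex] at h
      · intro h
        have hex : ∃ u, i ∈ P u := ⟨v, h⟩
        have hcv : hex.choose = v := by
          by_contra hne'
          exact (Finset.disjoint_left.mp (hdisj _ _ hne') hex.choose_spec) h
        simp [hfdef, hex, hcv]
    refine ⟨(List.finRange n).filterMap f, ?_⟩
    intro x y hxy
    rw [dInter_iff hxy, hadj x y hxy]
    constructor
    · rintro (h | h) <;>
      · rw [List.sublist_filterMap_iff] at h
        obtain ⟨l0, hl0, heq⟩ := h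
        obtain ⟨l', hl', hm⟩ := exists_map_of_filterMap f l0 _ heq.symm
        have hlen : l'.length = 4 := by
          have := congrArg List.length hm; simpa using this
        obtain ⟨p1, p2, p3, p4, rfl⟩ := list_len4 hlen
        simp only [List.map_cons, List.map_nil, List.cons.injEq, and_true] at hm
        obtain ⟨h1, h2, h3, h4⟩ := hm
        have hp : List.Pairwise (· < ·) [p1, p2, p3, p4] :=
          (List.pairwise_lt_finRange n).sublist (hl'.trans hl0)
        simp only [List.pairwise_cons, List.mem_cons, List.mem_singleton] at hp
        simp at hp
        first
          | exact ⟨p1, (hf _ _).mp h1, p3, (hf _ _).mp h3, p2, (hf _ _).mp h2,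
              p4, (hf _ _).mp h4, Or.inl ⟨by tauto, by tauto, by tauto⟩⟩
          | exact ⟨p2, (hf _ _).mp h2, p4, (hf _ _).mp h4, p3, (hf _ _).mp h3,
              p1, (hf _ _).mp h1, Or.inr (Or.inr (Or.inr ⟨by tauto, by tauto, by tauto⟩))⟩
    · rintro ⟨a, hax, c, hcx, b, hby, d, hdy, hcyc⟩
      have hfa : f a = some x := (hf a x).mpr hax
      have hfc : f c = some x := (hf c x).mpr hcx
      have hfb : f b = some y := (hf b y).mpr hby
      have hfd : f d = some y := (hf d y).mpr hdy
      rcases hcyc with ⟨h1, h2, h3⟩ | ⟨h1, h2, h3⟩ | ⟨h1, h2, h3⟩ | ⟨h1, h2, h3⟩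
      · exact Or.inl (by
          simpa [List.filterMap_cons, hfa, hfb, hfc, hfd] using
            (sublist4_finRange h1 h2 h3).filterMap f)
      · exact Or.inr (by
          simpa [List.filterMap_cons, hfa, hfb, hfc, hfd] using
            (sublist4_finRange h1 h2 h3).filterMap f)
      · exact Or.inl (by
          simpa [List.filterMap_cons, hfa, hfb, hfc, hfd] using
            (sublist4_finRange h1 h2 h3).filterMap f)
      · exact Or.inr (by
          simpa [List.filterMap_cons, hfa, hfb, hfc, hfd] using
            (sublist4_finRange h1 h2 h3).filterMap f)
  · rintro ⟨W, hrep⟩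
    set L : List V := (Finset.univ.filter (fun v : V => v ∉ W)).toList with hLdef
    set W' : List V := W ++ L with hW'def
    have hnotW : ∀ v ∈ L, v ∉ W := by
      intro v hv
      rw [hLdef, Finset.mem_toList, Finset.mem_filter] at hv
      exact hv.2
    have hLnodup : L.Nodup := Finset.nodup_toList _
    have hmemW' : ∀ v : V, v ∈ W' := by
      intro v
      by_cases h : v ∈ W
      · exact List.mem_append_left _ h
      · exact List.mem_append_right _ (by
          rw [hLdef, Finset.mem_toList, Finset.mem_filter]; exact ⟨Finset.mem_univ v, h⟩)
    refine ⟨W'.length, fun v => Finset.univ.filter (fun i => W'.get i = v), ?_, ?_, ?_⟩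
    · intro v
      obtain ⟨i, hi⟩ := List.mem_iff_get.mp (hmemW' v)
      exact ⟨i, by simp only [Finset.mem_filter]; exact ⟨Finset.mem_univ _, hi⟩⟩
    · intro u v huv
      simp only [Finset.disjoint_left, Finset.mem_filter, Finset.mem_univ, true_and]
      rintro i h1 h2
      exact huv (h1.symm.trans h2)
    · intro x y hxy
      rw [← hrep x y hxy, dInter_iff hxy]
      have hsubW' : ∀ {s : List V}, s <+ W → s <+ W' :=
        fun h => h.trans (List.sublist_append_left W L)
      have hback : ∀ s : List V, s <+ W' → s = [x, y, x, y] ∨ s = [y, x, y, x] → s <+ W := by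
        intro s hs hform
        have hcx : List.count x s = 2 := by
          rcases hform with rfl | rfl <;> simp [List.count_cons, hxy, hxy.symm]
        have hcy : List.count y s = 2 := by
          rcases hform with rfl | rfl <;> simp [List.count_cons, hxy, hxy.symm]
        have hnL : ∀ v : V, List.count v s = 2 → v ∉ L := by
          intro v hv hvL
          have hvW : v ∉ W := hnotW v hvL
          have hle := hs.count_le v
          rw [hv, hW'def, List.count_append] at hle
          have h0 : List.count v W = 0 := List.count_eq_zero.mpr hvW
          have h1 : List.count v L ≤ 1 := List.nodup_iff_count_le_one.mp hLnodup v
          omega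
        refine sublist_of_append_nodup hs ?_
        intro v hv
        have : v = x ∨ v = y := by
          rcases hform with rfl | rfl <;> (simp at hv; tauto)
        rcases this with rfl | rfl
        · exact hnL v hcx
        · exact hnL v hcy
      constructor
      · rintro (h | h)
        · obtain ⟨i1, i2, i3, i4, h12, h23, h34, g1, g2, g3, g4⟩ :=
            get_of_sublist4 (hsubW' h)
          exact ⟨i1, by simp only [Finset.mem_filter]; exact ⟨Finset.mem_univ _, g1⟩, i3, by simp only [Finset.mem_filter]; exact ⟨Finset.mem_univ _, g3⟩, i2, by simp only [Finset.mem_filter]; exact ⟨Finset.mem_univ _, g2⟩, i4, by simp only [Finset.mem_filter]; exact ⟨Finset.mem_univ _, g4⟩,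
            Or.inl ⟨h12, h23, h34⟩⟩
        · obtain ⟨i1, i2, i3, i4, h12, h23, h34, g1, g2, g3, g4⟩ :=
            get_of_sublist4 (hsubW' h)
          exact ⟨i2, by simp only [Finset.mem_filter]; exact ⟨Finset.mem_univ _, g2⟩, i4, by simp only [Finset.mem_filter]; exact ⟨Finset.mem_univ _, g4⟩, i3, by simp only [Finset.mem_filter]; exact ⟨Finset.mem_univ _, g3⟩, i1, by simp only [Finset.mem_filter]; exact ⟨Finset.mem_univ _, g1⟩,
            Or.inr (Or.inr (Or.inr ⟨h12, h23, h34⟩))⟩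
      · rintro ⟨a, hax, c, hcx, b, hby, d, hdy, hcyc⟩
        simp only [Finset.mem_filter, Finset.mem_univ, true_and] at hax hcx hby hdy
        rcases hcyc with ⟨h1, h2, h3⟩ | ⟨h1, h2, h3⟩ | ⟨h1, h2, h3⟩ | ⟨h1, h2, h3⟩
        · have hsub := sublist4_of_get W' h1 h2 h3
          rw [hax, hby, hcx, hdy] at hsub
          exact Or.inl (hback _ hsub (Or.inl rfl))
        · have hsub := sublist4_of_get W' h1 h2 h3
          rw [hax, hby, hcx, hdy] at hsub
          exact Or.inr (hback _ hsub (Or.inr rfl))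
        · have hsub := sublist4_of_get W' h1 h2 h3
          rw [hax, hby, hcx, hdy] at hsub
          exact Or.inl (hback _ hsub (Or.inl rfl))
        · have hsub := sublist4_of_get W' h1 h2 h3
          rw [hax, hby, hcx, hdy] at hsub
          exact Or.inr (hback _ hsub (Or.inr rfl))
end

section
/- If a word W general 2-word-represents a graph G, then every cyclic permutation (rotation) of W also general 2-word-represents G. -/
lemma dInter_four {V : Type*} {W : List V} {a b : V} (h : DIntersecting 2 W a b) :
    ∃ p q : V, p ≠ q ∧ (p = a ∨ p = b) ∧ (q = a ∨ q = b) ∧ [p, q, p, q].Sublist W := by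
  obtain ⟨l, hsub, hch, hmem, hlen⟩ := h
  have hsub4 : (l.take 4).Sublist W := (l.take_sublist 4).trans hsub
  have hch4 : (l.take 4).Chain' (· ≠ ·) := hch.take 4
  have hmem4 : ∀ c ∈ l.take 4, c = a ∨ c = b :=
    fun c hc => hmem c ((l.take_sublist 4).subset hc)
  have hlen4 : (l.take 4).length = 4 := by
    rw [List.length_take]; omega
  rcases ht : l.take 4 with _ | ⟨e1, _ | ⟨e2, _ | ⟨e3, _ | ⟨e4, rest⟩⟩⟩⟩ <;>
    rw [ht] at hsub4 hch4 hmem4 hlen4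
  · simp at hlen4
  · simp at hlen4
  · simp at hlen4
  · simp at hlen4
  have hrest : rest = [] := by
    have := hlen4; simp only [List.length_cons] at this
    exact List.length_eq_zero_iff.mp (by omega)
  subst hrest
  have m1 := hmem4 e1 (by simp)
  have m2 := hmem4 e2 (by simp)
  have m3 := hmem4 e3 (by simp)
  have m4 := hmem4 e4 (by simp)
  simp [List.Chain', List.isChain_cons_cons] at hch4
  obtain ⟨h12, h23, h34⟩ := hch4
  have he3 : e3 = e1 := by rcases m1 with rfl | rfl <;> rcases m2 with rfl | rfl <;>
    rcases m3 with rfl | rfl <;> tauto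
  have he4 : e4 = e2 := by rcases m1 with rfl | rfl <;> rcases m2 with rfl | rfl <;>
    rcases m4 with rfl | rfl <;> subst he3 <;> tauto
  rw [he3, he4] at hsub4
  exact ⟨e1, e2, h12, m1, m2, hsub4⟩

lemma dInter_of_four {V : Type*} {W : List V} {a b p q : V} (hpq : p ≠ q)
    (hp : p = a ∨ p = b) (hq : q = a ∨ q = b) (hs : [p, q, p, q].Sublist W) :
    DIntersecting 2 W a b := by
  refine ⟨[p, q, p, q], hs, ?_, ?_, by simp⟩
  · simp [List.Chain', List.isChain_cons_cons, hpq, hpq.symm]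
  · intro c hc; simp at hc; rcases hc with rfl | rfl | rfl | rfl <;> tauto

lemma dInter_rotate_one {V : Type*} {W : List V} {a b : V}
    (h : DIntersecting 2 W a b) : DIntersecting 2 (W.rotate 1) a b := by
  obtain ⟨p, q, hpq, hp, hq, hs⟩ := dInter_four h
  cases W with
  | nil => simp at hs
  | cons c T =>
    have hrot : (c :: T).rotate 1 = T ++ [c] := by
      simpa using List.rotate_cons_succ T c 0
    rw [hrot]
    rw [List.sublist_cons_iff] at hs
    rcases hs with hs | ⟨r, hr, hrs⟩
    · exact dInter_of_four hpq hp hq (hs.trans (List.sublist_append_left T [c]))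
    · -- [p,q,p,q] = c :: r, so p = c, r = [q,p,q] <+ T
      have hpc : p = c := by injection hr
      have hr' : r = [q, p, q] := by injection hr with _ h; exact h.symm
      subst hr'
      refine dInter_of_four hpq.symm hq hp ?_
      have h1 : [q, p, q].Sublist T := hrs
      have h2 : [p].Sublist [c] := by rw [hpc]
      exact h1.append h2

lemma dInter_rotate {V : Type*} {W : List V} {a b : V} (k : ℕ)
    (h : DIntersecting 2 W a b) : DIntersecting 2 (W.rotate k) a b := by
  induction k with
  | zero => simpa using h
  | succ n ih =>
    have := dInter_rotate_one ih
    rwa [List.rotate_rotate] at this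

lemma dInter_rotate_iff {V : Type*} {W : List V} {a b : V} (k : ℕ) :
    DIntersecting 2 (W.rotate k) a b ↔ DIntersecting 2 W a b := by
  constructor
  · intro h
    rcases Nat.eq_zero_or_pos W.length with h0 | hpos
    · rw [List.length_eq_zero_iff] at h0; subst h0; simpa using h
    · have := dInter_rotate (W.length - k % W.length) h
      rw [List.rotate_rotate] at this
      have hk : W.rotate (k + (W.length - k % W.length)) = W := by
        have h1 : W.rotate (k % W.length + (W.length - k % W.length)) =
            W.rotate (k + (W.length - k % W.length)) := by
          rw [← List.rotate_rotate, ← List.rotate_rotate, List.rotate_mod]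
        rw [← h1, Nat.add_sub_cancel' (Nat.le_of_lt (Nat.mod_lt _ hpos)), List.rotate_length]
      rwa [hk] at this
  · exact dInter_rotate k

/-- If `W` general `2`-word-represents a graph `G`, then every cyclic permutation
(rotation) of `W` also general `2`-word-represents `G`. -/
theorem gen2WordRepresents_rotate {V : Type*} (W : List V) (G : SimpleGraph V)
    (h : GenWordRepresents 2 W G) :
    ∀ k : ℕ, GenWordRepresents 2 (W.rotate k) G := by
  intro k x y hxy
  rw [dInter_rotate_iff]
  exact h x y hxy
end

section
/- In the bipartite construction word W = W₁⋯W_d (as in Theorem on bipartite graphs), for any two distinct vertices u_p, u_q ∈ U with {u_p, u_q} ∉ E, every alternating subsequence of W in letters {u_p, u_q} has length at most d + 1; hence u_p and u_q are not d-intersecting in W. -/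
/-- The block `F_i(u_j)`: an alternating word of length `d + 2` in the letters
`v_i, u_j` if `{v_i, u_j}` is an edge, and the empty word otherwise. -/
def bipBlock {d m : ℕ} (G : SimpleGraph (Fin d ⊕ Fin m)) [DecidableRel G.Adj]
    (i : Fin d) (j : Fin m) : List (Fin d ⊕ Fin m) :=
  if G.Adj (Sum.inl i) (Sum.inr j) then altWord (Sum.inl i) (Sum.inr j) (d + 2) else []

/-- The word `W_i = F_i(u_1)⋯F_i(u_m)` (increasing order of `j` for the first, third, …
block and decreasing order for the second, fourth, … block). -/
def bipRow {d m : ℕ} (G : SimpleGraph (Fin d ⊕ Fin m)) [DecidableRel G.Adj]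
    (i : Fin d) : List (Fin d ⊕ Fin m) :=
  ((if i.val % 2 = 0 then List.finRange m else (List.finRange m).reverse).map
    (bipBlock G i)).flatten

/-- The word `W = W₁W₂⋯W_d` of the bipartite construction. -/
def bipWord (d m : ℕ) (G : SimpleGraph (Fin d ⊕ Fin m)) [DecidableRel G.Adj] :
    List (Fin d ⊕ Fin m) :=
  ((List.finRange d).map (bipRow G)).flatten

section Aux

variable {V : Type*}

/-- Classification of short alternating sublists of `x^n y^{n'}`. -/
lemma bip_classify {x y : V} {n n' : ℕ} {l : List V}
    (h : l.Sublist (List.replicate n x ++ List.replicate n' y))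
    (hc : l.Chain' (· ≠ ·)) :
    l = [] ∨ l = [x] ∨ l = [y] ∨ l = [x, y] := by
  rw [List.sublist_append_iff] at h
  obtain ⟨u, v, rfl, hu, hv⟩ := h
  obtain ⟨a, ha, rfl⟩ := List.sublist_replicate_iff.1 hu
  obtain ⟨b, hb, rfl⟩ := List.sublist_replicate_iff.1 hv
  obtain ⟨hcu, hcv, -⟩ := List.isChain_append.1 hc
  have ha1 : a ≤ 1 := by
    by_contra hle
    obtain ⟨c, rfl⟩ : ∃ c, a = c + 2 := ⟨a - 2, by omega⟩
    rw [List.replicate_succ, List.replicate_succ, List.isChain_cons_cons] at hcu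
    exact hcu.1 rfl
  have hb1 : b ≤ 1 := by
    by_contra hle
    obtain ⟨c, rfl⟩ : ∃ c, b = c + 2 := ⟨b - 2, by omega⟩
    rw [List.replicate_succ, List.replicate_succ, List.isChain_cons_cons] at hcv
    exact hcv.1 rfl
  interval_cases a <;> interval_cases b <;> simp [List.replicate_succ]

lemma bip_flatten_single {ι : Type*} {g : ι → List V} {j : ι} :
    ∀ {L : List ι}, L.Nodup → (∀ a ∈ L, a ≠ j → g a = []) →
      ((L.map g).flatten).Sublist (g j) := by
  intro L
  induction L with
  | nil => intro _ _; simp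
  | cons h t ih =>
    intro hnd hv
    rw [List.map_cons, List.flatten_cons]
    by_cases hh : h = j
    · subst hh
      have : (t.map g).flatten = [] := by
        apply List.flatten_eq_nil_iff.2
        intro l hl
        obtain ⟨a, ha, rfl⟩ := List.mem_map.1 hl
        exact hv a (by simp [ha]) (fun he => (List.nodup_cons.1 hnd).1 (he ▸ ha))
      rw [this, List.append_nil]
    · rw [hv h (by simp) hh, List.nil_append]
      exact ih (List.nodup_cons.1 hnd).2 (fun a ha => hv a (by simp [ha]))

lemma bip_flatten_pair {ι : Type*} {g : ι → List V} {j₁ j₂ : ι} :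
    ∀ {L : List ι}, L.Nodup → ([j₁, j₂] : List ι).Sublist L →
      (∀ a ∈ L, a ≠ j₁ → a ≠ j₂ → g a = []) →
      ((L.map g).flatten).Sublist (g j₁ ++ g j₂) := by
  intro L
  induction L with
  | nil => intro _ hs; simp at hs
  | cons h t ih =>
    intro hnd hs hv
    rw [List.map_cons, List.flatten_cons]
    have hnd' := List.nodup_cons.1 hnd
    cases hs with
    | cons _ hs' =>
      have h1 : h ≠ j₁ := fun he => hnd'.1 (he ▸ hs'.subset (by simp))
      have h2 : h ≠ j₂ := fun he => hnd'.1 (he ▸ hs'.subset (by simp))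
      rw [hv h (by simp) h1 h2, List.nil_append]
      exact ih hnd'.2 hs' (fun a ha => hv a (by simp [ha]))
    | cons_cons _ hs' =>
      have hj2 : ((t.map g).flatten).Sublist (g j₂) := by
        apply bip_flatten_single hnd'.2
        intro a ha hne
        exact hv a (by simp [ha]) (fun he => hnd'.1 (he ▸ ha)) hne
      exact (List.Sublist.refl (g j₁)).append hj2

end Aux

section Aux2
variable {V : Type*}

lemma bip_pair_sublist {ι : Type*} {R : ι → ι → Prop} (hasymm : ∀ c d, R c d → ¬ R d c)
    {a b : ι} : ∀ {L : List ι}, L.Pairwise R → a ∈ L → b ∈ L → R a b →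
      ([a, b] : List ι).Sublist L := by
  intro L
  induction L with
  | nil => intro _ ha; simp at ha
  | cons h t ih =>
    intro hp ha hb hr
    obtain ⟨hph, hpt⟩ := List.pairwise_cons.1 hp
    by_cases hha : h = a
    · subst hha
      have hbt : b ∈ t := by
        rcases List.mem_cons.1 hb with rfl | hbt
        · exact absurd hr (hasymm _ _ hr)
        · exact hbt
      exact List.cons_sublist_cons.2 (List.singleton_sublist.2 hbt)
    · have hat : a ∈ t := (List.mem_cons.1 ha).resolve_left (fun he => hha he.symm)
      have hbt : b ∈ t := by
        rcases List.mem_cons.1 hb with rfl | hbt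
        · exact absurd hr (hasymm _ _ (hph a hat))
        · exact hbt
      exact (ih hpt hat hbt hr).cons h

/-- Rows alternate orientation between `(x, y)` and `(y, x)`. -/
inductive BipAltRows {V : Type*} : V → V → List (List V) → Prop
  | nil (x y : V) : BipAltRows x y []
  | cons {x y : V} {R : List V} {Ls : List (List V)} (n n' : ℕ)
      (hR : R.Sublist (List.replicate n x ++ List.replicate n' y))
      (h : BipAltRows y x Ls) : BipAltRows x y (R :: Ls)

lemma bip_main : ∀ (Ls : List (List V)) (x y : V), BipAltRows x y Ls →
    ∀ l : List V, l.Sublist Ls.flatten → l.Chain' (· ≠ ·) →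
      l.length ≤ Ls.length + 1 ∧ (l.head? ≠ some x → l.length ≤ Ls.length) := by
  intro Ls
  induction Ls with
  | nil =>
    intro x y _ l hl _
    have : l = [] := List.sublist_nil.mp (by simpa using hl)
    subst this
    simp
  | cons R Ls ih =>
    intro x y hAlt l hl hc
    rcases hAlt with _ | ⟨n, n', hR, hAlt'⟩
    rw [List.flatten_cons] at hl
    obtain ⟨l0, l1, rfl, h0, h1⟩ := List.sublist_append_iff.1 hl
    obtain ⟨hc0, hc1, hjun⟩ := List.isChain_append.1 hc
    have IH := ih y x hAlt' l1 h1 hc1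
    have IH1 := IH.1
    rcases bip_classify (h0.trans hR) hc0 with rfl | rfl | rfl | rfl
    · simp only [List.nil_append, List.length_cons]
      exact ⟨by omega, fun _ => by omega⟩
    · have hhd : ([x] ++ l1).head? = some x := rfl
      refine ⟨?_, fun hne => absurd hhd hne⟩
      simp only [List.length_append, List.length_cons, List.length_nil]
      omega
    · have hne : l1.head? ≠ some y := by
        intro hy
        exact hjun y (by simp) y (by simp [hy]) rfl
      have := IH.2 hne
      simp only [List.length_append, List.length_cons, List.length_nil]
      refine ⟨by omega, fun _ => by omega⟩
    · have hne : l1.head? ≠ some y := by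
        intro hy
        exact hjun y (by simp) y (by simp [hy]) rfl
      have := IH.2 hne
      have hhd : ([x, y] ++ l1).head? = some x := rfl
      refine ⟨?_, fun h2 => absurd hhd h2⟩
      simp only [List.length_append, List.length_cons, List.length_nil]
      omega
end Aux2

section Aux3
variable {V : Type*}

lemma bip_altRows_range (x y : V) (rows : ℕ → List V)
    (hrow : ∀ i, ∃ nn : ℕ × ℕ, rows i |>.Sublist
      (if i % 2 = 0 then List.replicate nn.1 x ++ List.replicate nn.2 y
       else List.replicate nn.1 y ++ List.replicate nn.2 x)) :
    ∀ (k s : ℕ), BipAltRows (if s % 2 = 0 then x else y) (if s % 2 = 0 then y else x)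
      ((List.range k).map (fun i => rows (s + i))) := by
  intro k
  induction k with
  | zero => intro s; simpa using BipAltRows.nil _ _
  | succ k ih =>
    intro s
    rw [List.range_succ_eq_map, List.map_cons, List.map_map]
    have hmap : (List.range k).map ((fun i => rows (s + i)) ∘ Nat.succ)
        = (List.range k).map (fun i => rows ((s + 1) + i)) := by
      apply List.map_congr_left
      intro a _
      simp only [Function.comp_apply]
      congr 1
      omega
    rw [hmap]
    obtain ⟨nn, hs⟩ := hrow s
    have ih' := ih (s + 1)
    have hmod : (s + 1) % 2 = if s % 2 = 0 then 1 else 0 := by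
      rcases Nat.mod_two_eq_zero_or_one s with h | h <;> simp [h] <;> omega
    rcases Nat.mod_two_eq_zero_or_one s with h | h
    · simp only [h, if_pos rfl] at hs ⊢
      simp only [hmod, h, if_pos rfl] at ih'
      norm_num at ih'
      exact BipAltRows.cons nn.1 nn.2 (by simpa using hs) ih'
    · simp only [h] at hs ⊢
      norm_num at hs ⊢
      simp only [hmod, h] at ih'
      norm_num at ih'
      exact BipAltRows.cons nn.1 nn.2 hs ih'
end Aux3

section Aux4

variable {d m : ℕ} (G : SimpleGraph (Fin d ⊕ Fin m)) [DecidableRel G.Adj]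

lemma bip_mem_block {i : Fin d} {j : Fin m} {c : Fin d ⊕ Fin m}
    (hc : c ∈ bipBlock G i j) : c = Sum.inl i ∨ c = Sum.inr j := by
  unfold bipBlock at hc
  split at hc
  · unfold altWord at hc
    obtain ⟨k, -, rfl⟩ := List.mem_map.1 hc
    split <;> simp
  · simp at hc

lemma bip_block_length (i : Fin d) (j : Fin m) : (bipBlock G i j).length ≤ d + 2 := by
  unfold bipBlock altWord
  split <;> simp

lemma bip_block_filter (S : (Fin d ⊕ Fin m) → Bool)
    (hS : ∀ i' : Fin d, S (Sum.inl i') = false) (i : Fin d) (j : Fin m) :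
    ((bipBlock G i j).filter S).Sublist (List.replicate (d + 2) (Sum.inr j)) := by
  rw [List.sublist_replicate_iff]
  refine ⟨((bipBlock G i j).filter S).length, ?_, ?_⟩
  · exact le_trans (List.length_filter_le _ _) (bip_block_length G i j)
  · apply List.eq_replicate_of_mem
    intro b hb
    rcases bip_mem_block G (List.mem_of_mem_filter hb) with h | h
    · exfalso
      have := List.of_mem_filter hb
      rw [h, hS] at this
      simp at this
    · exact h

end Aux4

section Aux5

variable {d m : ℕ} (G : SimpleGraph (Fin d ⊕ Fin m)) [DecidableRel G.Adj]

lemma bip_block_filter_nil (S : (Fin d ⊕ Fin m) → Bool)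
    (hS : ∀ i' : Fin d, S (Sum.inl i') = false) {i : Fin d} {j : Fin m}
    (hj : S (Sum.inr j) = false) :
    (bipBlock G i j).filter S = [] := by
  rw [List.filter_eq_nil_iff]
  intro a ha
  rcases bip_mem_block G ha with h | h <;> simp [h, hS, hj]

lemma bip_row_filter (S : (Fin d ⊕ Fin m) → Bool)
    (hS : ∀ i' : Fin d, S (Sum.inl i') = false)
    {p₀ q₀ : Fin m} (hpq : p₀ < q₀)
    (hoff : ∀ j : Fin m, j ≠ p₀ → j ≠ q₀ → S (Sum.inr j) = false) (i : Fin d) :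
    ((bipRow G i).filter S).Sublist
      (if i.val % 2 = 0 then
        List.replicate (d + 2) (Sum.inr p₀ : Fin d ⊕ Fin m) ++ List.replicate (d + 2) (Sum.inr q₀)
       else
        List.replicate (d + 2) (Sum.inr q₀ : Fin d ⊕ Fin m) ++ List.replicate (d + 2) (Sum.inr p₀)) := by
  unfold bipRow
  rw [List.filter_flatten, List.map_map]
  have hasymm : ∀ c e : Fin m, c < e → ¬ e < c := fun c e h h' => absurd (h.trans h') (lt_irrefl c)
  split
  · next hpar =>
    have hpair : ([p₀, q₀] : List (Fin m)).Sublist (List.finRange m) :=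
      bip_pair_sublist hasymm (List.pairwise_lt_finRange m)
        (List.mem_finRange p₀) (List.mem_finRange q₀) hpq
    have h1 := bip_flatten_pair (g := fun j => (bipBlock G i j).filter S)
      (List.nodup_finRange m) hpair
      (fun a _ ha1 ha2 => bip_block_filter_nil G S hS (hoff a ha1 ha2))
    refine (h1.trans ?_)
    exact (bip_block_filter G S hS i p₀).append (bip_block_filter G S hS i q₀)
  · next hpar =>
    have hpair : ([q₀, p₀] : List (Fin m)).Sublist (List.finRange m).reverse := by
      apply bip_pair_sublist (R := fun a b : Fin m => b < a)
        (fun c e h h' => absurd (h.trans h') (lt_irrefl e))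
      · exact List.pairwise_reverse.2 (List.pairwise_lt_finRange m)
      · simp
      · simp
      · exact hpq
    have h1 := bip_flatten_pair (g := fun j => (bipBlock G i j).filter S)
      (List.nodup_reverse.2 (List.nodup_finRange m)) hpair
      (fun a _ ha1 ha2 => bip_block_filter_nil G S hS (hoff a ha2 ha1))
    refine (h1.trans ?_)
    exact (bip_block_filter G S hS i q₀).append (bip_block_filter G S hS i p₀)

end Aux5

/-- In the bipartite construction word `W = W₁⋯W_d`, for distinct non-adjacent
`u_p, u_q ∈ U`, every alternating subsequence of `W` in the letters `{u_p, u_q}` has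
length at most `d + 1`; hence `u_p` and `u_q` are not `d`-intersecting in `W`. -/
theorem bipartite_word_U_not_intersecting (d m : ℕ) (hdm : d ≤ m)
    (G : SimpleGraph (Fin d ⊕ Fin m)) [DecidableRel G.Adj]
    (hV : ∀ i j : Fin d, ¬ G.Adj (Sum.inl i) (Sum.inl j))
    (hU : ∀ i j : Fin m, ¬ G.Adj (Sum.inr i) (Sum.inr j))
    (p q : Fin m) (hpq : p ≠ q) :
    (∀ l : List (Fin d ⊕ Fin m), l.Sublist (bipWord d m G) → l.Chain' (· ≠ ·) →
        (∀ c ∈ l, c = Sum.inr p ∨ c = Sum.inr q) → l.length ≤ d + 1) ∧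
      ¬ DIntersecting d (bipWord d m G) (Sum.inr p : Fin d ⊕ Fin m) (Sum.inr q) := by
  classical
  have hfirst : ∀ l : List (Fin d ⊕ Fin m), l.Sublist (bipWord d m G) → l.Chain' (· ≠ ·) →
      (∀ c ∈ l, c = Sum.inr p ∨ c = Sum.inr q) → l.length ≤ d + 1 := by
    intro l hsub hchain hmem
    set S : (Fin d ⊕ Fin m) → Bool := fun c => decide (c = Sum.inr p ∨ c = Sum.inr q)
      with hSdef
    set p₀ := min p q with hp₀
    set q₀ := max p q with hq₀
    have hp₀q₀ : p₀ < q₀ := min_lt_max.2 hpq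
    have hset : (p₀ = p ∧ q₀ = q) ∨ (p₀ = q ∧ q₀ = p) := by
      rcases le_total p q with h | h
      · exact Or.inl ⟨min_eq_left h, max_eq_right h⟩
      · exact Or.inr ⟨min_eq_right h, max_eq_left h⟩
    have hS : ∀ i' : Fin d, S (Sum.inl i') = false := by intro i'; simp [hSdef]
    have hoff : ∀ j : Fin m, j ≠ p₀ → j ≠ q₀ → S (Sum.inr j) = false := by
      intro j h1 h2
      simp only [hSdef, decide_eq_false_iff_not]
      rintro (h | h) <;> rcases hset with ⟨e1, e2⟩ | ⟨e1, e2⟩ <;>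
        simp_all
    set rows : ℕ → List (Fin d ⊕ Fin m) :=
      fun i => if h : i < d then (bipRow G ⟨i, h⟩).filter S else [] with hrowsdef
    have hrows : ∀ i, ∃ nn : ℕ × ℕ, (rows i).Sublist
        (if i % 2 = 0 then
          List.replicate nn.1 (Sum.inr p₀ : Fin d ⊕ Fin m) ++ List.replicate nn.2 (Sum.inr q₀)
         else
          List.replicate nn.1 (Sum.inr q₀ : Fin d ⊕ Fin m) ++ List.replicate nn.2 (Sum.inr p₀)) := by
      intro i
      refine ⟨(d + 2, d + 2), ?_⟩
      by_cases h : i < d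
      · simp only [hrowsdef, dif_pos h]
        simpa using bip_row_filter G S hS hp₀q₀ hoff ⟨i, h⟩
      · simp only [hrowsdef, dif_neg h]
        split <;> exact List.nil_sublist _
    have hAlt := bip_altRows_range (Sum.inr p₀ : Fin d ⊕ Fin m) (Sum.inr q₀) rows hrows d 0
    norm_num at hAlt
    have hlS : l.filter S = l :=
      List.filter_eq_self.2 (by intro a ha; simpa [hSdef] using hmem a ha)
    have hWeq : (bipWord d m G).filter S = ((List.range d).map rows).flatten := by
      unfold bipWord
      rw [List.filter_flatten, List.map_map]
      congr 1
      rw [← (show (List.finRange d).map (fun i : Fin d => (i : ℕ)) = List.range d by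
        apply List.ext_getElem <;> simp), List.map_map]
      apply List.map_congr_left
      intro a _
      simp only [Function.comp_apply, hrowsdef, dif_pos a.isLt]
    have hWsub : l.Sublist (((List.range d).map rows).flatten) := by
      rw [← hWeq, ← hlS]
      exact hsub.filter S
    have hfin := (bip_main _ _ _ hAlt l hWsub hchain).1
    simpa using hfin
  refine ⟨hfirst, ?_⟩
  rintro ⟨l, hsub, hchain, hmem, hlen⟩
  have := hfirst l hsub hchain hmem
  omega
end

section
/- Gale's evenness condition: Let t₁ < t₂ < ⋯ < t_r be reals, r > d + 1 ≥ 2, let x(t) = (t, t², …, t^d) be the moment curve in ℝ^d, and let T_d be a d-element subset of T = {t₁,…,t_r}. Then conv{x(t) : t ∈ T_d} is a facet of the cyclic polytope conv{x(t) : t ∈ T} if and only if for every two elements of T \ T_d, the number of elements of T_d lying strictly between them (in the order of the reals) is even. -/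
open Polynomial

namespace GaleAux

variable {r : ℕ}

/-- Sign of the product `∏ (t j - t i)` is determined by the parity of the number of
elements of `Td` above `j`. -/
lemma sign_prod (t : Fin r → ℝ) (ht : StrictMono t) (Td : Finset (Fin r)) {j : Fin r}
    (hj : j ∉ Td) :
    0 < (-1 : ℝ) ^ (Td.filter (fun k => j < k)).card * ∏ i ∈ Td, (t j - t i) := by
  have hdisj : Disjoint (Td.filter (fun k => k < j)) (Td.filter (fun k => j < k)) := by
    rw [Finset.disjoint_left]
    intro k hk1 hk2
    simp only [Finset.mem_filter] at hk1 hk2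
    exact absurd hk2.2 (lt_asymm hk1.2)
  have hsplit : Td = Td.filter (fun k => k < j) ∪ Td.filter (fun k => j < k) := by
    ext k
    simp only [Finset.mem_union, Finset.mem_filter]
    constructor
    · intro hk
      rcases lt_trichotomy k j with h | h | h
      · exact Or.inl ⟨hk, h⟩
      · exact absurd (h ▸ hk) hj
      · exact Or.inr ⟨hk, h⟩
    · rintro (⟨hk, -⟩ | ⟨hk, -⟩) <;> exact hk
  have hprod : ∏ i ∈ Td, (t j - t i)
      = (∏ i ∈ Td.filter (fun k => k < j), (t j - t i))
        * ∏ i ∈ Td.filter (fun k => j < k), (t j - t i) := by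
    rw [← Finset.prod_union hdisj, ← hsplit]
  have hpos1 : 0 < ∏ i ∈ Td.filter (fun k => k < j), (t j - t i) := by
    apply Finset.prod_pos
    intro i hi
    simp only [Finset.mem_filter] at hi
    exact sub_pos.mpr (ht hi.2)
  have hprod2 : ∏ i ∈ Td.filter (fun k => j < k), (t j - t i)
      = (-1 : ℝ) ^ (Td.filter (fun k => j < k)).card
        * ∏ i ∈ Td.filter (fun k => j < k), (t i - t j) := by
    rw [← Finset.prod_const, ← Finset.prod_mul_distrib]
    apply Finset.prod_congr rfl
    intro i _
    ring
  have hpos2 : 0 < ∏ i ∈ Td.filter (fun k => j < k), (t i - t j) := by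
    apply Finset.prod_pos
    intro i hi
    simp only [Finset.mem_filter] at hi
    exact sub_pos.mpr (ht hi.2)
  have hsq : (-1 : ℝ) ^ (Td.filter (fun k => j < k)).card
      * (-1 : ℝ) ^ (Td.filter (fun k => j < k)).card = 1 := by
    rw [← pow_add]
    exact Even.neg_one_pow ⟨_, rfl⟩
  rw [hprod, hprod2]
  calc (0:ℝ) < (∏ i ∈ Td.filter (fun k => k < j), (t j - t i))
        * ∏ i ∈ Td.filter (fun k => j < k), (t i - t j) := mul_pos hpos1 hpos2
    _ = (-1 : ℝ) ^ (Td.filter (fun k => j < k)).card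
        * ((∏ i ∈ Td.filter (fun k => k < j), (t j - t i))
          * ((-1 : ℝ) ^ (Td.filter (fun k => j < k)).card
            * ∏ i ∈ Td.filter (fun k => j < k), (t i - t j))) := by
      rw [show ∀ a b c : ℝ, a * (b * (a * c)) = (a * a) * (b * c) from fun a b c => by ring,
        hsq, one_mul]

lemma count_split (Td : Finset (Fin r)) {i j : Fin r} (hij : i < j) (hj : j ∉ Td) :
    (Td.filter (fun k => i < k)).card
      = (Td.filter (fun k => i < k ∧ k < j)).card + (Td.filter (fun k => j < k)).card := by
  rw [← Finset.card_union_of_disjoint, ← Finset.filter_or]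
  · apply congrArg
    apply Finset.filter_congr
    intro k hk
    constructor
    · intro h
      rcases lt_trichotomy k j with h' | h' | h'
      · exact Or.inl ⟨h, h'⟩
      · exact absurd (h' ▸ hk) hj
      · exact Or.inr h'
    · rintro (⟨h, -⟩ | h)
      · exact h
      · exact hij.trans h
  · rw [Finset.disjoint_left]
    intro k hk1 hk2
    simp only [Finset.mem_filter] at hk1 hk2
    exact absurd hk2.2 (lt_asymm hk1.2.2)

lemma parity_eq (Td : Finset (Fin r))
    (H : ∀ i j : Fin r, i ∉ Td → j ∉ Td →
      Even ((Td.filter (fun k => i < k ∧ k < j)).card))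
    {i j : Fin r} (hi : i ∉ Td) (hj : j ∉ Td) :
    (-1 : ℝ) ^ (Td.filter (fun k => i < k)).card
      = (-1 : ℝ) ^ (Td.filter (fun k => j < k)).card := by
  rcases lt_trichotomy i j with h | h | h
  · rw [count_split Td h hj, pow_add, (H i j hi hj).neg_one_pow, one_mul]
  · rw [h]
  · symm
    rw [count_split Td h hi, pow_add, (H j i hj hi).neg_one_pow, one_mul]

lemma pos_mul_parity {a x y : ℝ} {m n : ℕ}
    (h1 : 0 < (-1 : ℝ) ^ m * x) (h2 : 0 < a * x)
    (h3 : 0 < (-1 : ℝ) ^ n * y) (h4 : 0 < a * y) : Even (m + n) := by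
  have hm : 0 < (-1 : ℝ) ^ m * a := by nlinarith [mul_pos h1 h2, sq_nonneg x]
  have hn : 0 < (-1 : ℝ) ^ n * a := by nlinarith [mul_pos h3 h4, sq_nonneg y]
  have hmn : 0 < (-1 : ℝ) ^ (m + n) := by
    rw [pow_add]
    nlinarith [mul_pos hm hn, sq_nonneg a]
  by_contra ho
  rw [Nat.not_even_iff_odd] at ho
  rw [ho.neg_one_pow] at hmn
  linarith

end GaleAux

open GaleAux

/-- Gale's evenness condition: for reals `t₁ < ⋯ < t_r` with `r > d + 1 ≥ 2` and a
`d`-element subset `Td` of the index set, the convex hull of the corresponding points of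
the moment curve `x(s) = (s, s², …, s^d)` is a facet of the cyclic polytope (i.e. the
points of `Td` lie on a hyperplane having all remaining points strictly on one side) iff
between any two points not in `Td` there is an even number of points of `Td`. -/
theorem gale_evenness (d r : ℕ) (hd : 1 ≤ d) (hr : d + 1 < r)
    (t : Fin r → ℝ) (ht : StrictMono t) (Td : Finset (Fin r)) (hTd : Td.card = d) :
    (∃ (f : (Fin d → ℝ) →ₗ[ℝ] ℝ) (c : ℝ),
        (∀ i ∈ Td, f (fun k : Fin d => t i ^ (k.val + 1)) = c) ∧
        (∀ i ∉ Td, f (fun k : Fin d => t i ^ (k.val + 1)) < c)) ↔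
      ∀ i j : Fin r, i ∉ Td → j ∉ Td →
        Even ((Td.filter (fun k => i < k ∧ k < j)).card) := by
  have htinj : Function.Injective t := ht.injective
  have hex : ∃ j₀ : Fin r, j₀ ∉ Td := by
    by_contra h
    push_neg at h
    have hsub : (Finset.univ : Finset (Fin r)) ⊆ Td := fun x _ => h x
    have := Finset.card_le_card hsub
    simp [hTd] at this
    omega
  obtain ⟨j₀, hj₀⟩ := hex
  constructor
  · rintro ⟨f, c, hf0, hfneg⟩ i j hi hj
    by_cases hij : i < j
    swap
    · convert (show Even (0 : ℕ) from ⟨0, rfl⟩)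
      rw [Finset.card_eq_zero, Finset.filter_eq_empty_iff]
      intro k _
      push_neg
      intro h1
      exact le_of_lt (lt_of_le_of_lt (not_lt.mp hij) h1)
    -- the affine functional gives a polynomial vanishing on `Td`
    set a : Fin d → ℝ := fun k => f (fun m => if k = m then 1 else 0) with ha
    set p : ℝ[X] := C c - ∑ k : Fin d, C (a k) * X ^ (k.val + 1) with hp
    have heval : ∀ s : ℝ, p.eval s = c - f (fun k : Fin d => s ^ (k.val + 1)) := by
      intro s
      rw [LinearMap.pi_apply_eq_sum_univ f (fun k : Fin d => s ^ (k.val + 1))]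
      simp only [hp, eval_sub, eval_C, eval_finset_sum, eval_mul, eval_pow, eval_X,
        smul_eq_mul]
      congr 1
      apply Finset.sum_congr rfl
      intro k _
      rw [mul_comm]
    have hc0 : 0 < p.eval (t j₀) := by
      rw [heval]
      linarith [hfneg j₀ hj₀]
    have hp0 : p ≠ 0 := by
      intro h
      rw [h, eval_zero] at hc0
      exact lt_irrefl 0 hc0
    have hdeg : p.natDegree ≤ d := by
      refine le_trans (natDegree_sub_le _ _) (max_le (by simp) ?_)
      apply Polynomial.natDegree_sum_le_of_forall_le
      intro k _
      refine le_trans (natDegree_C_mul_le _ _) ?_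
      rw [natDegree_X_pow]
      omega
    have hroots : p.roots = Td.val.map t := by
      have h1 : Td.val.map t ≤ p.roots := by
        rw [Multiset.le_iff_subset (Td.nodup.map htinj)]
        intro x hx
        obtain ⟨i', hi', rfl⟩ := Multiset.mem_map.mp hx
        rw [mem_roots hp0]
        show p.eval (t i') = 0
        rw [heval, hf0 i' hi', sub_self]
      have h2 : Multiset.card p.roots ≤ Multiset.card (Td.val.map t) := by
        rw [Multiset.card_map]
        show Multiset.card p.roots ≤ Td.card
        rw [hTd]
        exact le_trans p.card_roots' hdeg
      exact (Multiset.eq_of_le_of_card_le h1 h2).symm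
    obtain ⟨g, hg⟩ := p.prod_multiset_X_sub_C_dvd
    have hq_deg : ((p.roots.map fun a => X - C a).prod).natDegree = d := by
      rw [natDegree_multiset_prod_X_sub_C_eq_card, hroots, Multiset.card_map]
      exact hTd
    have hg0 : g ≠ 0 := by
      rintro rfl
      rw [mul_zero] at hg
      exact hp0 hg
    have hmonic : ((p.roots.map fun a => X - C a).prod).Monic :=
      monic_multiset_prod_of_monic _ _ (fun a _ => monic_X_sub_C a)
    have hdg : g.natDegree = 0 := by
      have h := natDegree_mul hmonic.ne_zero hg0
      rw [← hg, hq_deg] at h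
      omega
    have hga : g = C (g.coeff 0) := eq_C_of_natDegree_eq_zero hdg
    set a₀ := g.coeff 0 with ha₀
    have hpeval : ∀ s : ℝ, p.eval s = (∏ i' ∈ Td, (s - t i')) * a₀ := by
      intro s
      rw [hg, hga, eval_mul, eval_C, eval_multiset_prod]
      congr 1
      rw [hroots, Multiset.map_map, Multiset.map_map]
      simp only [Function.comp_def, eval_sub, eval_X, eval_C]
      rfl
    have e1 := sign_prod t ht Td hi
    have e2 := sign_prod t ht Td hj
    have h1 : 0 < a₀ * ∏ i' ∈ Td, (t i - t i') := by
      have hpos : 0 < p.eval (t i) := by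
        rw [heval]
        linarith [hfneg i hi]
      rw [hpeval] at hpos
      linarith [hpos, mul_comm (∏ i' ∈ Td, (t i - t i')) a₀]
    have h2 : 0 < a₀ * ∏ i' ∈ Td, (t j - t i') := by
      have hpos : 0 < p.eval (t j) := by
        rw [heval]
        linarith [hfneg j hj]
      rw [hpeval] at hpos
      linarith [hpos, mul_comm (∏ i' ∈ Td, (t j - t i')) a₀]
    have heven := pos_mul_parity e1 h1 e2 h2
    rw [count_split Td hij hj] at heven
    rw [Nat.even_iff] at heven ⊢
    omega
  · intro H
    set q : ℝ[X] := C ((-1 : ℝ) ^ (Td.filter (fun k => j₀ < k)).card)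
      * ∏ i ∈ Td, (X - C (t i)) with hq
    have hqdeg : q.natDegree ≤ d := by
      refine le_trans (natDegree_mul_le) ?_
      rw [natDegree_C, zero_add]
      refine le_trans (natDegree_prod_le _ _) ?_
      simp [natDegree_X_sub_C, hTd]
    have hqeval : ∀ s : ℝ, q.eval s
        = (-1 : ℝ) ^ (Td.filter (fun k => j₀ < k)).card * ∏ i ∈ Td, (s - t i) := by
      intro s
      simp [hq, eval_prod]
    refine ⟨∑ k : Fin d, (-(q.coeff (k.val + 1))) • LinearMap.proj k, q.coeff 0, ?_, ?_⟩
    all_goals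
      have hfe : ∀ s : ℝ,
          (∑ k : Fin d, (-(q.coeff (k.val + 1))) • LinearMap.proj (R := ℝ)
            (φ := fun _ : Fin d => ℝ) k) (fun k : Fin d => s ^ (k.val + 1))
            = q.coeff 0 - q.eval s := by
        intro s
        rw [eval_eq_sum_range' (lt_of_le_of_lt hqdeg (Nat.lt_succ_self d)),
          Finset.sum_range_succ']
        simp only [LinearMap.sum_apply, LinearMap.smul_apply, LinearMap.proj_apply,
          smul_eq_mul, pow_zero, mul_one]
        rw [Fin.sum_univ_eq_sum_range (fun k => -q.coeff (k + 1) * s ^ (k + 1)) d]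
        rw [show q.coeff 0 - (∑ i ∈ Finset.range d, q.coeff (i + 1) * s ^ (i + 1)
            + q.coeff 0) = ∑ i ∈ Finset.range d, -(q.coeff (i + 1) * s ^ (i + 1)) by
          rw [Finset.sum_neg_distrib]; ring]
        apply Finset.sum_congr rfl
        intro k _
        ring
    · intro i hiTd
      rw [hfe, hqeval]
      rw [Finset.prod_eq_zero hiTd (sub_self (t i)), mul_zero, sub_zero]
    · intro i hiTd
      rw [hfe, hqeval]
      have hpar := parity_eq Td H hj₀ hiTd
      rw [hpar]
      have := sign_prod t ht Td hiTd
      linarith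
end

section
/- Breen's theorem on Radon partitions of cyclic polytopes: Let A and B be disjoint finite sets of points on the moment curve x(t) = (t, t², …, t^d) in ℝ^d (given by parameter sets T_A, T_B ⊂ ℝ with T_A ∩ T_B = ∅). Then conv(A) ∩ conv(B) ≠ ∅ if and only if the sequence of labels (A or B) of the points of A ∪ B, ordered by their parameters along the curve, contains an alternating subsequence of length d + 2 (i.e., d + 2 points with parameters t_1 < t_2 < ⋯ < t_{d+2} alternately belonging to A and B). -/
open Polynomial in
lemma breen_no_alt_signs (d : ℕ) (q : Polynomial ℝ) (hq : q.natDegree ≤ d)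
    (s : Fin (d + 2) → ℝ) (hs : StrictMono s)
    (halt : ∀ i : Fin (d + 1), q.eval (s i.castSucc) * q.eval (s i.succ) < 0) : False := by
  have hroot : ∀ i : Fin (d + 1), ∃ r ∈ Set.Ioo (s i.castSucc) (s i.succ), q.eval r = 0 := by
    intro i
    have hab : s i.castSucc < s i.succ := hs (by simp [Fin.lt_def])
    have hcont : ContinuousOn (fun x => q.eval x) (Set.Icc (s i.castSucc) (s i.succ)) :=
      q.continuous.continuousOn
    rcases mul_neg_iff.mp (halt i) with ⟨h1, h2⟩ | ⟨h1, h2⟩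
    · have := intermediate_value_Ioo' hab.le hcont (a := s i.castSucc) (b := s i.succ)
      have h0 : (0 : ℝ) ∈ Set.Ioo (q.eval (s i.succ)) (q.eval (s i.castSucc)) := ⟨h2, h1⟩
      obtain ⟨r, hr, hr0⟩ := this h0
      exact ⟨r, hr, hr0⟩
    · have := intermediate_value_Ioo hab.le hcont (a := s i.castSucc) (b := s i.succ)
      have h0 : (0 : ℝ) ∈ Set.Ioo (q.eval (s i.castSucc)) (q.eval (s i.succ)) := ⟨h1, h2⟩
      obtain ⟨r, hr, hr0⟩ := this h0
      exact ⟨r, hr, hr0⟩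
  choose r hr hr0 using hroot
  have hrmono : StrictMono r := by
    intro i j hij
    calc r i < s i.succ := (hr i).2
    _ ≤ s j.castSucc := hs.monotone (by simp [Fin.le_def]; omega)
    _ < r j := (hr j).1
  have hq0 : q = 0 := by
    apply Polynomial.eq_zero_of_natDegree_lt_card_of_eval_eq_zero q hrmono.injective hr0
    simpa using Nat.lt_succ_of_le hq
  have := halt 0
  rw [hq0] at this
  simp at this


open Polynomial in
lemma breen_disjoint_of_poly (d : ℕ) (Q : Polynomial ℝ) (hdeg : Q.natDegree ≤ d)
    (TA TB : Finset ℝ) (hA : ∀ a ∈ TA, 0 < Q.eval a) (hB : ∀ a ∈ TB, Q.eval a < 0) :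
    ¬ (convexHull ℝ ((fun s : ℝ => fun k : Fin d => s ^ (k.val + 1)) '' (TA : Set ℝ)) ∩
        convexHull ℝ ((fun s : ℝ => fun k : Fin d => s ^ (k.val + 1)) '' (TB : Set ℝ))).Nonempty := by
  set f : (Fin d → ℝ) → ℝ := fun w => ∑ k : Fin d, Q.coeff (k.val + 1) * w k with hf
  have hlin : IsLinearMap ℝ f := by
    constructor
    · intro x y
      simp only [hf, Pi.add_apply, mul_add, Finset.sum_add_distrib]
    · intro c x
      simp only [hf, Pi.smul_apply, smul_eq_mul, Finset.mul_sum]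
      congr 1; ext k; ring
  have hev : ∀ a : ℝ, f (fun k : Fin d => a ^ (k.val + 1)) = Q.eval a - Q.coeff 0 := by
    intro a
    have h1 : Q.eval a = ∑ i ∈ Finset.range (d + 1), Q.coeff i * a ^ i :=
      Q.eval_eq_sum_range' (Nat.lt_succ_of_le hdeg) a
    rw [h1, Finset.sum_range_succ']
    simp [hf, Fin.sum_univ_eq_sum_range (fun i => Q.coeff (i + 1) * a ^ (i + 1))]
  rintro ⟨w, hwA, hwB⟩
  have hsubA : convexHull ℝ ((fun s : ℝ => fun k : Fin d => s ^ (k.val + 1)) '' (TA : Set ℝ)) ⊆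
      {w | -Q.coeff 0 < f w} := by
    apply convexHull_min _ (convex_halfSpace_gt hlin _)
    rintro _ ⟨a, ha, rfl⟩
    have := hA a ha
    simp only [Set.mem_setOf_eq, hev a]
    linarith
  have hsubB : convexHull ℝ ((fun s : ℝ => fun k : Fin d => s ^ (k.val + 1)) '' (TB : Set ℝ)) ⊆
      {w | f w < -Q.coeff 0} := by
    apply convexHull_min _ (convex_halfSpace_lt hlin _)
    rintro _ ⟨a, ha, rfl⟩
    have := hB a ha
    simp only [Set.mem_setOf_eq, hev a]
    linarith
  have h1 := hsubA hwA; have h2 := hsubB hwB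
  simp only [Set.mem_setOf_eq] at h1 h2
  linarith

open Polynomial in
lemma breen_backward (d : ℕ) (TA TB : Finset ℝ)
    (s : Fin (d + 2) → ℝ) (hs : StrictMono s) (hmem : ∀ i, s i ∈ TA ∪ TB)
    (halt : ∀ i : Fin (d + 1), ¬(s i.castSucc ∈ TA ↔ s i.succ ∈ TA)) :
    (convexHull ℝ ((fun s : ℝ => fun k : Fin d => s ^ (k.val + 1)) '' (TA : Set ℝ)) ∩
        convexHull ℝ ((fun s : ℝ => fun k : Fin d => s ^ (k.val + 1)) '' (TB : Set ℝ))).Nonempty := by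
  classical
  set x : ℝ → (Fin d → ℝ) := fun s => fun k : Fin d => s ^ (k.val + 1) with hx
  set U : Set (Fin d → ℝ) := (fun i => x (s i)) '' {i : Fin (d + 2) | s i ∈ TA} with hU
  set V : Set (Fin d → ℝ) := (fun i => x (s i)) '' {i : Fin (d + 2) | s i ∉ TA} with hV
  have hUA : U ⊆ x '' (TA : Set ℝ) := by rintro _ ⟨i, hi, rfl⟩; exact ⟨s i, hi, rfl⟩
  have hVB : V ⊆ x '' (TB : Set ℝ) := by
    rintro _ ⟨i, hi, rfl⟩
    have := hmem i
    rw [Finset.mem_union] at this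
    exact ⟨s i, this.resolve_left hi, rfl⟩
  suffices h : (convexHull ℝ U ∩ convexHull ℝ V).Nonempty by
    exact h.mono (Set.inter_subset_inter (convexHull_mono hUA) (convexHull_mono hVB))
  by_contra hcon
  rw [Set.not_nonempty_iff_eq_empty] at hcon
  have hUfin : U.Finite := (Set.toFinite _).image _
  have hVfin : V.Finite := (Set.toFinite _).image _
  obtain ⟨f, u, v, hfu, huv, hfv⟩ :=
    geometric_hahn_banach_compact_closed (convex_convexHull ℝ U) (hUfin.isCompact_convexHull (𝕜 := ℝ))
      (convex_convexHull ℝ V) (hVfin.isCompact_convexHull (𝕜 := ℝ)).isClosed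
      (Set.disjoint_iff_inter_eq_empty.mpr hcon)
  -- the polynomial
  set g : Fin d → (Fin d → ℝ) := fun i => fun j => if i = j then (1 : ℝ) else 0 with hg
  set q : Polynomial ℝ :=
    (∑ k : Fin d, Polynomial.C (f (g k)) * Polynomial.X ^ (k.val + 1)) - Polynomial.C ((u + v) / 2)
    with hq
  have hdeg : q.natDegree ≤ d := by
    apply le_trans (Polynomial.natDegree_sub_le _ _)
    simp only [max_le_iff]
    constructor
    · apply Polynomial.natDegree_sum_le_of_forall_le
      intro k _
      apply le_trans (Polynomial.natDegree_C_mul_le _ _)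
      simp [Polynomial.natDegree_X_pow]
    · simp
  have heval : ∀ a : ℝ, q.eval a = f (x a) - (u + v) / 2 := by
    intro a
    have hxa : x a = ∑ i : Fin d, x a i • g i := pi_eq_sum_univ (x a)
    rw [hq]
    simp only [Polynomial.eval_sub, Polynomial.eval_finset_sum, Polynomial.eval_mul,
      Polynomial.eval_C, Polynomial.eval_pow, Polynomial.eval_X]
    rw [hxa, map_sum]
    congr 1
    apply Finset.sum_congr rfl
    intro k _
    rw [map_smul]
    simp [hx, smul_eq_mul, mul_comm]
  have hsign : ∀ j : Fin (d + 2), (s j ∈ TA → q.eval (s j) < 0) ∧ (s j ∉ TA → 0 < q.eval (s j)) := by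
    intro j
    constructor
    · intro hj
      have hmemU : x (s j) ∈ convexHull ℝ U := subset_convexHull ℝ U ⟨j, hj, rfl⟩
      have := hfu _ hmemU
      rw [heval]
      linarith
    · intro hj
      have hmemV : x (s j) ∈ convexHull ℝ V := subset_convexHull ℝ V ⟨j, hj, rfl⟩
      have := hfv _ hmemV
      rw [heval]
      linarith
  apply breen_no_alt_signs d q hdeg s hs
  intro i
  rcases Classical.em (s i.castSucc ∈ TA) with h1 | h1
  · have h2 : s i.succ ∉ TA := fun h => halt i ⟨fun _ => h, fun _ => h1⟩
    exact mul_neg_of_neg_of_pos ((hsign _).1 h1) ((hsign _).2 h2)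
  · have h2 : s i.succ ∈ TA := by
      by_contra h2
      exact halt i ⟨fun h => absurd h h1, fun h => absurd h h2⟩
    exact mul_neg_of_pos_of_neg ((hsign _).2 h1) ((hsign _).1 h2)

set_option maxHeartbeats 1000000

open Classical in
lemma breen_const_between (b : ℕ → Prop) (i : ℕ) :
    ∀ j, i ≤ j → (∀ k, i ≤ k → k < j → (b k ↔ b (k + 1))) → (b i ↔ b j) := by
  intro j
  induction j with
  | zero => intro h _; simp [Nat.le_zero.mp h]
  | succ m ih =>
    intro h hk
    rcases Nat.lt_or_ge i (m + 1) with h1 | h1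
    · have hi : i ≤ m := by omega
      have := ih hi (fun k hk1 hk2 => hk k hk1 (by omega))
      exact this.trans (hk m hi (by omega))
    · have : i = m + 1 := by omega
      subst this; rfl

open Classical in
lemma breen_parity (n : ℕ) (b : ℕ → Prop) (C : Finset ℕ)
    (hC : ∀ i, i ∈ C ↔ (i + 1 < n ∧ ¬(b i ↔ b (i + 1)))) :
    ∀ k j, j + k = n - 1 →
      ((b j ↔ b (n - 1)) ↔ Even ((C.filter (fun i => j ≤ i)).card)) := by
  intro k
  induction k with
  | zero =>
    intro j hj
    have hemp : C.filter (fun i => j ≤ i) = ∅ := by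
      ext i
      simp only [Finset.mem_filter, Finset.notMem_empty, iff_false, not_and]
      intro hi
      have := (hC i).mp hi
      omega
    rw [hemp]
    have : j = n - 1 := by omega
    subst this
    simp
  | succ m ih =>
    intro j hj
    have hj1 : j + 1 + m = n - 1 := by omega
    have hIH := ih (j + 1) hj1
    have hsplit : C.filter (fun i => j ≤ i) =
        if j ∈ C then insert j (C.filter (fun i => j + 1 ≤ i)) else C.filter (fun i => j + 1 ≤ i) := by
      split_ifs with hjC
      · ext i
        simp only [Finset.mem_filter, Finset.mem_insert]
        constructor
        · rintro ⟨hi, hji⟩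
          rcases Nat.eq_or_lt_of_le hji with h | h
          · exact Or.inl h.symm
          · exact Or.inr ⟨hi, h⟩
        · rintro (rfl | ⟨hi, hji⟩)
          · exact ⟨hjC, le_refl _⟩
          · exact ⟨hi, by omega⟩
      · ext i
        simp only [Finset.mem_filter]
        constructor
        · rintro ⟨hi, hji⟩
          refine ⟨hi, ?_⟩
          rcases Nat.eq_or_lt_of_le hji with h | h
          · exact absurd (h ▸ hi) hjC
          · omega
        · rintro ⟨hi, hji⟩
          exact ⟨hi, by omega⟩
    rw [hsplit]
    by_cases hjC : j ∈ C
    · rw [if_pos hjC, Finset.card_insert_of_notMem (by simp)]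
      have hchg := (hC j).mp hjC
      rw [Nat.even_add_one]
      tauto
    · rw [if_neg hjC]
      have hnchg : b j ↔ b (j + 1) := by
        have h1 : j + 1 < n := by omega
        by_contra h
        exact hjC ((hC j).mpr ⟨h1, h⟩)
      tauto

open Classical in
lemma breen_alt_exists (n d : ℕ) (b : ℕ → Prop) (C : Finset ℕ)
    (hC : ∀ i, i ∈ C ↔ (i + 1 < n ∧ ¬(b i ↔ b (i + 1))))
    (hcard : d + 1 ≤ C.card) :
    ∃ e : Fin (d + 2) → ℕ, (∀ i, e i < n) ∧ (∀ i j : Fin (d + 2), i < j → e i < e j) ∧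
      ∀ i : Fin (d + 1), ¬(b (e i.castSucc) ↔ b (e i.succ)) := by
  set c : Fin C.card ↪o ℕ := C.orderEmbOfFin rfl with hc
  have hmemC : ∀ l : Fin C.card, (c l) ∈ C := fun l => Finset.orderEmbOfFin_mem C rfl l
  have hsurjC : ∀ k ∈ C, ∃ l : Fin C.card, c l = k := by
    intro k hk
    have := Finset.range_orderEmbOfFin C rfl
    have : k ∈ Set.range (C.orderEmbOfFin rfl) := by rw [this]; exact hk
    exact this
  have hlt : ∀ l : Fin C.card, c l + 1 < n := fun l => ((hC (c l)).mp (hmemC l)).1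
  refine ⟨fun i => if h : i.val = 0 then c ⟨0, by omega⟩
      else c ⟨i.val - 1, by have := i.isLt; omega⟩ + 1, ?_, ?_, ?_⟩
  · intro i
    by_cases h : i.val = 0
    · simp only [dif_pos h]; exact lt_trans (Nat.lt_succ_self _) (hlt _)
    · simp only [dif_neg h]; exact hlt _
  · intro i j hij
    have hij' : i.val < j.val := hij
    by_cases hi : i.val = 0
    · simp only [dif_pos hi, dif_neg (by omega : ¬ j.val = 0)]
      have h1 : (⟨0, by omega⟩ : Fin C.card) ≤ ⟨j.val - 1, by have := j.isLt; omega⟩ := by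
        simp [Fin.le_def]
      have := c.monotone h1
      omega
    · simp only [dif_neg hi, dif_neg (by omega : ¬ j.val = 0)]
      have h1 : (⟨i.val - 1, by have := i.isLt; omega⟩ : Fin C.card) <
          ⟨j.val - 1, by have := j.isLt; omega⟩ := by
        simp [Fin.lt_def]; omega
      have := c.strictMono h1
      omega
  · intro i
    have hcs : (i.castSucc : Fin (d + 2)).val = i.val := rfl
    have hss : (i.succ : Fin (d + 2)).val = i.val + 1 := rfl
    by_cases hi : i.val = 0
    · simp only [dif_pos (by omega : (i.castSucc : Fin (d+2)).val = 0),
        dif_neg (by omega : ¬ (i.succ : Fin (d+2)).val = 0)]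
      have : (⟨(i.succ : Fin (d+2)).val - 1, by omega⟩ : Fin C.card) = ⟨0, by omega⟩ := by
        simp [hss, hi]
      rw [this]
      exact ((hC _).mp (hmemC ⟨0, by omega⟩)).2
    · simp only [dif_neg (by omega : ¬ (i.castSucc : Fin (d+2)).val = 0),
        dif_neg (by omega : ¬ (i.succ : Fin (d+2)).val = 0)]
      set l := i.val - 1 with hl
      have hll : l + 1 < C.card := by have := i.isLt; omega
      have hl0 : l < C.card := by omega
      set L : Fin C.card := ⟨l, hl0⟩ with hL
      set L1 : Fin C.card := ⟨l + 1, hll⟩ with hL1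
      have e1 : (⟨(i.castSucc : Fin (d+2)).val - 1, by omega⟩ : Fin C.card) = L := rfl
      have e2 : (⟨(i.succ : Fin (d+2)).val - 1, by omega⟩ : Fin C.card) = L1 := by
        rw [hL1]; congr 1; rw [hss]; omega
      rw [e1, e2]
      have hmono : c L < c L1 := c.strictMono (show (⟨l, hl0⟩ : Fin C.card) < ⟨l + 1, hll⟩ from Fin.mk_lt_mk.mpr (Nat.lt_succ_self l))
      have hconst : b (c L + 1) ↔ b (c L1) := by
        apply breen_const_between b _ _ (by omega)
        intro k hk1 hk2
        by_contra hne
        have hkC : k ∈ C := (hC k).mpr ⟨by have := hlt L1; omega, hne⟩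
        obtain ⟨l', hl'⟩ := hsurjC k hkC
        have h1 : L < l' := c.lt_iff_lt.mp (by rw [hl']; omega)
        have h2 : l' < L1 := c.lt_iff_lt.mp (by rw [hl']; omega)
        rw [Fin.lt_def] at h1 h2
        rw [hL] at h1
        rw [hL1] at h2
        simp at h1 h2
        omega
      have hchg := ((hC _).mp (hmemC L1)).2
      tauto

open Classical Polynomial in
lemma breen_prod_sign (n : ℕ) (t : ℕ → ℝ) (ht : ∀ i j, i < j → j < n → t i < t j)
    (C : Finset ℕ) (hCn : ∀ i ∈ C, i + 1 < n) (j : ℕ) (hj : j < n) :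
    (0 < (∏ i ∈ C, (X - Polynomial.C ((t i + t (i + 1)) / 2))).eval (t j) ↔
        Even ((C.filter (fun i => j ≤ i)).card)) ∧
      (∏ i ∈ C, (X - Polynomial.C ((t i + t (i + 1)) / 2))).eval (t j) ≠ 0 := by
  rw [Polynomial.eval_prod]
  simp only [Polynomial.eval_sub, Polynomial.eval_X, Polynomial.eval_C]
  rw [← Finset.prod_filter_mul_prod_filter_not C (fun i => j ≤ i)]
  have hBpos : (0 : ℝ) < ∏ i ∈ C.filter (fun i => ¬ j ≤ i), (t j - (t i + t (i + 1)) / 2) := by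
    apply Finset.prod_pos
    intro i hi
    rw [Finset.mem_filter] at hi
    have hin := hCn i hi.1
    have h1 : t i < t (i + 1) := ht i (i + 1) (Nat.lt_succ_self i) hin
    have h2 : t (i + 1) ≤ t j := by
      rcases Nat.eq_or_lt_of_le (by omega : i + 1 ≤ j) with h | h
      · rw [h]
      · exact (ht (i + 1) j h hj).le
    have : (t i + t (i + 1)) / 2 < t (i + 1) := by linarith
    linarith
  have hAneg : ∀ i ∈ C.filter (fun i => j ≤ i), t j - (t i + t (i + 1)) / 2 < 0 := by
    intro i hi
    rw [Finset.mem_filter] at hi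
    have hin := hCn i hi.1
    have h1 : t i < t (i + 1) := ht i (i + 1) (Nat.lt_succ_self i) hin
    have h2 : t j ≤ t i := by
      rcases Nat.eq_or_lt_of_le hi.2 with h | h
      · rw [h]
      · exact (ht j i h (by omega)).le
    linarith
  set A := C.filter (fun i => j ≤ i) with hA
  have hrw : ∏ i ∈ A, (t j - (t i + t (i + 1)) / 2) =
      (-1) ^ A.card * ∏ i ∈ A, ((t i + t (i + 1)) / 2 - t j) := by
    rw [← Finset.prod_const, ← Finset.prod_mul_distrib]
    apply Finset.prod_congr rfl
    intros; ring
  have hApos : (0 : ℝ) < ∏ i ∈ A, ((t i + t (i + 1)) / 2 - t j) := by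
    apply Finset.prod_pos
    intro i hi
    have := hAneg i hi
    linarith
  rw [hrw]
  rcases Nat.even_or_odd A.card with he | ho
  · rw [he.neg_one_pow]
    constructor
    · simp only [iff_true_intro he, iff_true]
      nlinarith
    · nlinarith
  · rw [ho.neg_one_pow]
    constructor
    · rw [iff_false_intro (Nat.not_even_iff_odd.mpr ho)]
      simp only [iff_false, not_lt]
      nlinarith
    · nlinarith

open Classical Polynomial in
lemma breen_forward (d : ℕ) (TA TB : Finset ℝ) (hdisj : Disjoint TA TB)
    (hnex : ¬ ∃ s : Fin (d + 2) → ℝ, StrictMono s ∧ (∀ i, s i ∈ TA ∪ TB) ∧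
        ∀ i : Fin (d + 1), ¬(s i.castSucc ∈ TA ↔ s i.succ ∈ TA)) :
    ¬ (convexHull ℝ ((fun s : ℝ => fun k : Fin d => s ^ (k.val + 1)) '' (TA : Set ℝ)) ∩
        convexHull ℝ ((fun s : ℝ => fun k : Fin d => s ^ (k.val + 1)) '' (TB : Set ℝ))).Nonempty := by
  set n := (TA ∪ TB).card with hn
  set em := (TA ∪ TB).orderEmbOfFin rfl with hem
  set t : ℕ → ℝ := fun i => if h : i < n then em ⟨i, h⟩ else 0 with htdef
  have ht : ∀ i j, i < j → j < n → t i < t j := by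
    intro i j hij hjn
    rw [htdef]
    simp only [dif_pos (lt_trans hij hjn), dif_pos hjn]
    exact em.strictMono (Fin.mk_lt_mk.mpr hij)
  have hmem : ∀ i, i < n → t i ∈ TA ∪ TB := by
    intro i hi
    rw [htdef]
    simp only [dif_pos hi]
    exact Finset.orderEmbOfFin_mem _ rfl _
  have hsurj : ∀ a ∈ TA ∪ TB, ∃ j, j < n ∧ t j = a := by
    intro a ha
    have hrange := Finset.range_orderEmbOfFin (TA ∪ TB) (rfl : (TA ∪ TB).card = n)
    have : a ∈ Set.range em := by rw [hem, hrange]; exact ha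
    obtain ⟨⟨j, hj⟩, hja⟩ := this
    exact ⟨j, hj, by rw [htdef]; exact (dif_pos hj).trans hja⟩
  set b : ℕ → Prop := fun i => t i ∈ TA with hb
  set K : Finset ℕ := (Finset.range n).filter (fun i => i + 1 < n ∧ ¬(b i ↔ b (i + 1))) with hK
  have hKiff : ∀ i, i ∈ K ↔ (i + 1 < n ∧ ¬(b i ↔ b (i + 1))) := by
    intro i
    rw [hK, Finset.mem_filter, Finset.mem_range]
    constructor
    · rintro ⟨_, h⟩; exact h
    · rintro ⟨h1, h2⟩; exact ⟨by omega, h1, h2⟩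
  have hcard : K.card ≤ d := by
    by_contra hcon
    obtain ⟨e, he1, he2, he3⟩ := breen_alt_exists n d b K hKiff (by omega)
    exact hnex ⟨fun i => t (e i), fun i j hij => ht _ _ (he2 i j hij) (he1 j),
      fun i => hmem _ (he1 i), fun i => he3 i⟩
  set P : Polynomial ℝ := ∏ i ∈ K, (X - Polynomial.C ((t i + t (i + 1)) / 2)) with hP
  have hPdeg : P.natDegree = K.card := by
    rw [hP, Polynomial.natDegree_prod_of_monic _ _ (fun i _ => monic_X_sub_C _)]
    simp [Polynomial.natDegree_X_sub_C]
  set Q : Polynomial ℝ := if b (n - 1) then P else -P with hQ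
  have hQdeg : Q.natDegree ≤ d := by
    rw [hQ]
    split_ifs <;> simp [Polynomial.natDegree_neg, hPdeg, hcard]
  have hsign : ∀ j, j < n → (b j → 0 < Q.eval (t j)) ∧ (¬ b j → Q.eval (t j) < 0) := by
    intro j hj
    have hpar := breen_parity n b K hKiff (n - 1 - j) j (by omega)
    have hps := breen_prod_sign n t ht K (fun i hi => ((hKiff i).mp hi).1) j hj
    rw [← hP] at hps
    by_cases hbn : b (n - 1)
    · rw [hQ, if_pos hbn]
      constructor
      · intro hbj
        exact hps.1.mpr (hpar.mp (iff_of_true hbj hbn))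
      · intro hbj
        have : ¬ Even ((K.filter (fun i => j ≤ i)).card) := by
          intro he
          exact hbj ((hpar.mpr he).mpr hbn)
        have h1 := fun h => this (hps.1.mp h)
        rcases lt_trichotomy (P.eval (t j)) 0 with h | h | h
        · exact h
        · exact absurd h hps.2
        · exact absurd h h1
    · rw [hQ, if_neg hbn]
      simp only [Polynomial.eval_neg]
      constructor
      · intro hbj
        have : ¬ Even ((K.filter (fun i => j ≤ i)).card) := by
          intro he
          exact hbn ((hpar.mpr he).mp hbj)
        have h1 := fun h => this (hps.1.mp h)
        rcases lt_trichotomy (P.eval (t j)) 0 with h | h | h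
        · linarith
        · exact absurd h hps.2
        · exact absurd h h1
      · intro hbj
        have hev : Even ((K.filter (fun i => j ≤ i)).card) :=
          hpar.mp (iff_of_false hbj hbn)
        have := hps.1.mpr hev
        linarith
  apply breen_disjoint_of_poly d Q hQdeg TA TB
  · intro a ha
    obtain ⟨j, hj, rfl⟩ := hsurj a (Finset.mem_union_left _ ha)
    exact (hsign j hj).1 ha
  · intro a ha
    obtain ⟨j, hj, rfl⟩ := hsurj a (Finset.mem_union_right _ ha)
    have hbj : ¬ b j := fun h => (Finset.disjoint_left.mp hdisj) h ha
    exact (hsign j hj).2 hbj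


/-- Breen's theorem: for disjoint finite parameter sets `TA`, `TB ⊂ ℝ`, the convex hulls of
the corresponding point sets on the moment curve `x(s) = (s, s², …, s^d)` in `ℝ^d` meet iff
there are `d + 2` parameters `s₁ < ⋯ < s_{d+2}` in `TA ∪ TB` belonging alternately to `TA`
and `TB`. -/
theorem breen_radon_cyclic (d : ℕ) (hd : 1 ≤ d) (TA TB : Finset ℝ)
    (hdisj : Disjoint TA TB) :
    (convexHull ℝ ((fun s : ℝ => fun k : Fin d => s ^ (k.val + 1)) '' (TA : Set ℝ)) ∩
        convexHull ℝ ((fun s : ℝ => fun k : Fin d => s ^ (k.val + 1)) '' (TB : Set ℝ))).Nonempty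
      ↔ ∃ s : Fin (d + 2) → ℝ, StrictMono s ∧ (∀ i, s i ∈ TA ∪ TB) ∧
          ∀ i : Fin (d + 1), ¬(s i.castSucc ∈ TA ↔ s i.succ ∈ TA) := by
  constructor
  · intro h
    by_contra hnex
    exact breen_forward d TA TB hdisj hnex h
  · rintro ⟨s, hs, hmem, halt⟩
    exact breen_backward d TA TB s hs hmem halt
end

section
/- For every m ≥ 3, the m-cycle C_m is general 2-word-representable: there is a word W over the alphabet {1,…,m} such that for distinct i, j, the letters i and j have an alternating subsequence of length ≥ 4 in W if and only if i and j are adjacent in C_m. -/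
namespace CycleRepAux

/-- The letter `k mod m` as an element of `Fin m`. -/
def f (m : ℕ) (hm : 0 < m) (k : ℕ) : Fin m := ⟨k % m, Nat.mod_lt _ hm⟩

/-- Block `i` of the word: `[i, i+1, i, i+1]` (mod `m`). -/
def blk (m : ℕ) (hm : 0 < m) (i : ℕ) : List (Fin m) :=
  [f m hm i, f m hm (i + 1), f m hm i, f m hm (i + 1)]

/-- Concatenation of blocks `s, s+1, …, s+n-1`. -/
def Wseg (m : ℕ) (hm : 0 < m) (s n : ℕ) : List (Fin m) :=
  (List.range' s n).flatMap (blk m hm)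

lemma Wseg_append (m : ℕ) (hm : 0 < m) (s n k : ℕ) :
    Wseg m hm s n ++ Wseg m hm (s + n) k = Wseg m hm s (n + k) := by
  rw [Wseg, Wseg, Wseg, ← List.flatMap_append]
  congr 1
  have h : List.range' s n 1 ++ List.range' (s + 1 * n) k 1 = List.range' s (n + k) 1 := List.range'_append
  simpa [Nat.add_comm] using h

lemma mem_Wseg {m : ℕ} {hm : 0 < m} {s n : ℕ} {c : Fin m} :
    c ∈ Wseg m hm s n ↔ ∃ i, s ≤ i ∧ i < s + n ∧ (c = f m hm i ∨ c = f m hm (i + 1)) := by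
  simp only [Wseg, List.mem_flatMap, List.mem_range'_1, blk, List.mem_cons,
    List.not_mem_nil, or_false]
  constructor
  · rintro ⟨i, ⟨h1, h2⟩, h3⟩
    exact ⟨i, h1, h2, by tauto⟩
  · rintro ⟨i, h1, h2, h3⟩
    exact ⟨i, ⟨h1, h2⟩, by tauto⟩

lemma length_le_one_of_const {α : Type*} {l : List α} {x : α}
    (h : ∀ c ∈ l, c = x) (hch : l.Chain' (· ≠ ·)) : l.length ≤ 1 := by
  match l with
  | [] => simp
  | [a] => simp
  | a :: b :: t =>
    exfalso
    have hab : a ≠ b := (List.isChain_cons_cons.mp hch).1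
    exact hab ((h a (by simp)).trans (h b (by simp)).symm)

lemma len_le_three {α : Type*} {x y : α} {P Q R l : List α}
    (hl : l.Sublist (P ++ Q ++ R)) (hch : l.Chain' (· ≠ ·))
    (hmem : ∀ c ∈ l, c = x ∨ c = y)
    (hyP : y ∉ P) (hxQ : x ∉ Q) (hyR : y ∉ R) : l.length ≤ 3 := by
  rw [List.sublist_append_iff] at hl
  obtain ⟨l12, l3, rfl, hl12, hl3⟩ := hl
  rw [List.sublist_append_iff] at hl12
  obtain ⟨l1, l2, rfl, hl1, hl2⟩ := hl12
  have h1 : l1.length ≤ 1 := by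
    refine length_le_one_of_const (x := x) (fun c hc => ?_) (hch.prefix ⟨l2 ++ l3, by simp⟩)
    rcases hmem c (by simp [hc]) with h | h
    · exact h
    · exact absurd (h ▸ hl1.subset hc) hyP
  have h2 : l2.length ≤ 1 := by
    refine length_le_one_of_const (x := y) (fun c hc => ?_) (hch.infix ⟨l1, l3, by simp⟩)
    rcases hmem c (by simp [hc]) with h | h
    · exact absurd (h ▸ hl2.subset hc) hxQ
    · exact h
  have h3 : l3.length ≤ 1 := by
    refine length_le_one_of_const (x := x) (fun c hc => ?_) (hch.suffix ⟨l1 ++ l2, by simp⟩)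
    rcases hmem c (by simp [hc]) with h | h
    · exact h
    · exact absurd (h ▸ hl3.subset hc) hyR
  simp only [List.length_append]
  omega

lemma val_eq_of_eq_f {m : ℕ} {hm : 0 < m} {c : Fin m} {k : ℕ} (h : c = f m hm k) :
    c.val = k % m := by rw [h]; rfl

lemma blk_sublist (m : ℕ) (hm : 0 < m) {i : ℕ} (hi : i < m) :
    (blk m hm i).Sublist (Wseg m hm 0 m) := by
  have h1 : Wseg m hm 0 i ++ Wseg m hm i (m - i) = Wseg m hm 0 m := by
    simpa [Nat.add_sub_cancel' (le_of_lt hi)] using Wseg_append m hm 0 i (m - i)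
  have h2 : Wseg m hm i 1 ++ Wseg m hm (i + 1) (m - i - 1) = Wseg m hm i (m - i) := by
    have := Wseg_append m hm i 1 (m - i - 1)
    rwa [show 1 + (m - i - 1) = m - i by omega] at this
  have hb : (blk m hm i).Sublist (Wseg m hm i 1) := by
    simp [Wseg, List.range'_one]
  have hmid : (blk m hm i).Sublist (Wseg m hm i (m - i)) := by
    rw [← h2]
    exact hb.trans (List.sublist_append_left _ _)
  rw [← h1]
  exact hmid.trans (List.sublist_append_right _ _)

lemma DI_of_adj (m : ℕ) (hm : 0 < m) (x y : Fin m) (hxy : x ≠ y)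
    (h : (x.val + 1) % m = y.val) : DIntersecting 2 (Wseg m hm 0 m) x y := by
  have hfx : f m hm x.val = x := by
    simp [f, Fin.ext_iff, Nat.mod_eq_of_lt x.isLt]
  have hfy : f m hm (x.val + 1) = y := by
    simp [f, Fin.ext_iff, h]
  refine ⟨[x, y, x, y], ?_, ?_, ?_, ?_⟩
  · have := blk_sublist m hm x.isLt
    rwa [blk, hfx, hfy] at this
  · simp [List.Chain', List.isChain_cons_cons, hxy, hxy.symm]
  · intro c hc; simp at hc; tauto
  · simp

lemma DI_symm {V : Type*} {d : ℕ} {W : List V} {a b : V}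
    (h : DIntersecting d W a b) : DIntersecting d W b a := by
  obtain ⟨l, h1, h2, h3, h4⟩ := h
  exact ⟨l, h1, h2, fun c hc => (h3 c hc).symm, h4⟩

lemma not_DI (m : ℕ) (hm : 3 ≤ m) (hm0 : 0 < m) (x y : Fin m) (hab : x.val < y.val)
    (h1 : y.val ≠ x.val + 1) (h2 : ¬(x.val = 0 ∧ y.val = m - 1)) :
    ¬ DIntersecting 2 (Wseg m hm0 0 m) x y := by
  rintro ⟨l, hsub, hch, hmem, hlen⟩
  set a := x.val with ha
  set b := y.val with hb
  have hbm : b < m := y.isLt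
  have hb2 : a + 2 ≤ b := by omega
  rcases Nat.eq_zero_or_pos a with haz | hap
  · -- a = 0 : split as block 0 ++ middle ++ last block
    have hbm2 : b ≤ m - 2 := by omega
    have hdec : Wseg m hm0 0 1 ++ Wseg m hm0 1 (m - 2) ++ Wseg m hm0 (m - 1) 1
        = Wseg m hm0 0 m := by
      rw [Wseg_append m hm0 0 1 (m - 2)]
      have := Wseg_append m hm0 0 (1 + (m - 2)) 1
      rw [show 0 + (1 + (m - 2)) = m - 1 by omega] at this
      rw [this]
      congr 1
      omega
    rw [← hdec] at hsub
    have hlen3 : l.length ≤ 3 := by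
      refine len_le_three hsub hch hmem ?_ ?_ ?_
      · rw [mem_Wseg]
        rintro ⟨i, hi1, hi2, hc | hc⟩ <;> have := val_eq_of_eq_f hc
        · rw [Nat.mod_eq_of_lt (by omega)] at this; omega
        · rw [Nat.mod_eq_of_lt (by omega)] at this; omega
      · rw [mem_Wseg]
        rintro ⟨i, hi1, hi2, hc | hc⟩ <;> have := val_eq_of_eq_f hc
        · rw [Nat.mod_eq_of_lt (by omega)] at this; omega
        · rw [Nat.mod_eq_of_lt (by omega)] at this; omega
      · rw [mem_Wseg]
        rintro ⟨i, hi1, hi2, hc | hc⟩ <;> have := val_eq_of_eq_f hc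
        · rw [show i = m - 1 by omega, Nat.mod_eq_of_lt (by omega)] at this; omega
        · rw [show i + 1 = m by omega, Nat.mod_self] at this; omega
    omega
  · -- a ≥ 1 : split as first a+1 blocks ++ rest ++ []
    have hdec : Wseg m hm0 0 (a + 1) ++ Wseg m hm0 (a + 1) (m - (a + 1)) ++ ([] : List (Fin m))
        = Wseg m hm0 0 m := by
      rw [List.append_nil]
      have h := Wseg_append m hm0 0 (a + 1) (m - (a + 1))
      rw [Nat.zero_add] at h
      rw [h]
      congr 1
      omega
    rw [← hdec] at hsub
    have hlen3 : l.length ≤ 3 := by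
      refine len_le_three hsub hch hmem ?_ ?_ (by simp)
      · rw [mem_Wseg]
        rintro ⟨i, hi1, hi2, hc | hc⟩ <;> have := val_eq_of_eq_f hc
        · rw [Nat.mod_eq_of_lt (by omega)] at this; omega
        · rw [Nat.mod_eq_of_lt (by omega)] at this; omega
      · rw [mem_Wseg]
        rintro ⟨i, hi1, hi2, hc | hc⟩ <;> have := val_eq_of_eq_f hc
        · rw [Nat.mod_eq_of_lt (by omega)] at this; omega
        · rcases Nat.lt_or_ge (i + 1) m with h | h
          · rw [Nat.mod_eq_of_lt h] at this; omega
          · rw [show i + 1 = m by omega, Nat.mod_self] at this; omega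
    omega

end CycleRepAux

open CycleRepAux in
/-- For every `m ≥ 3`, the `m`-cycle is general `2`-word-representable: there is a word `W`
over `Fin m` such that distinct letters `i`, `j` admit an alternating subsequence of length
at least `4` in `W` iff `i` and `j` are consecutive on the cycle. -/
theorem cycle_gen2WordRepresentable (m : ℕ) (hm : 3 ≤ m) :
    ∃ W : List (Fin m), ∀ x y : Fin m, x ≠ y →
      (DIntersecting 2 W x y ↔ ((x.val + 1) % m = y.val ∨ (y.val + 1) % m = x.val)) := by
  have hm0 : 0 < m := by omega
  refine ⟨Wseg m hm0 0 m, fun x y hxy => ⟨?_, ?_⟩⟩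
  · intro hDI
    by_contra hadj
    push_neg at hadj
    obtain ⟨hadj1, hadj2⟩ := hadj
    have hne : x.val ≠ y.val := fun h => hxy (Fin.ext h)
    rcases Nat.lt_or_ge x.val y.val with h | h
    · refine not_DI m hm hm0 x y h ?_ ?_ hDI
      · intro heq
        apply hadj1
        rw [← heq] at *
        exact Nat.mod_eq_of_lt y.isLt
      · rintro ⟨h0, h1⟩
        apply hadj2
        rw [h0, h1, show m - 1 + 1 = m by omega, Nat.mod_self]
    · have h' : y.val < x.val := by omega
      refine not_DI m hm hm0 y x h' ?_ ?_ (DI_symm hDI)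
      · intro heq
        apply hadj2
        rw [← heq] at *
        exact Nat.mod_eq_of_lt x.isLt
      · rintro ⟨h0, h1⟩
        apply hadj1
        rw [h0, h1, show m - 1 + 1 = m by omega, Nat.mod_self]
  · rintro (h | h)
    · exact DI_of_adj m hm0 x y hxy h
    · exact DI_symm (DI_of_adj m hm0 y x hxy.symm h)
end
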